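/- arXiv:1309.1935 — 5 statements merged into one kernel-verified Lean document; each statement's English description precedes it below -/
import Mathlib

section
/- Let (V, 𝒜) be a measurable space, θ a probability measure on V, and f : V → ℝ a bounded measurable function. Then −log ∫_V e^{−f} dθ = inf_{γ ∈ 𝒫(V)} { R(γ‖θ) + ∫_V f dγ }, where the infimum is taken over all probability measures γ on (V, 𝒜). -/
open MeasureTheory Classical Real

lemma gibbs {V : Type*} [MeasurableSpace V] {μ ν : Measure V}
    [IsProbabilityMeasure μ] [IsProbabilityMeasure ν]
    (hμν : μ ≪ ν) (h_int : Integrable (llr μ ν) μ) :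
    0 ≤ ∫ x, llr μ ν x ∂μ := by
  have h1 : ∀ᵐ x ∂μ, -llr μ ν x ≤ (ν.rnDeriv μ x).toReal - 1 := by
    filter_upwards [Measure.rnDeriv_pos hμν, hμν.ae_le (Measure.rnDeriv_lt_top μ ν),
      Measure.inv_rnDeriv hμν] with x hpos hlt hinv
    have ht : 0 < (μ.rnDeriv ν x).toReal := ENNReal.toReal_pos hpos.ne' hlt.ne
    have : -llr μ ν x = Real.log (μ.rnDeriv ν x).toReal⁻¹ := by
      rw [llr, Real.log_inv]
    rw [this]
    have h2 : (μ.rnDeriv ν x).toReal⁻¹ = (ν.rnDeriv μ x).toReal := by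
      rw [← ENNReal.toReal_inv, ← hinv]; rfl
    calc Real.log (μ.rnDeriv ν x).toReal⁻¹ ≤ (μ.rnDeriv ν x).toReal⁻¹ - 1 :=
          Real.log_le_sub_one_of_pos (inv_pos.mpr ht)
      _ = (ν.rnDeriv μ x).toReal - 1 := by rw [h2]
  have h3 : ∫ x, -llr μ ν x ∂μ ≤ ∫ x, ((ν.rnDeriv μ x).toReal - 1) ∂μ :=
    integral_mono_ae h_int.neg (Measure.integrable_toReal_rnDeriv.sub (integrable_const 1)) h1
  have h4 : ∫ x, ((ν.rnDeriv μ x).toReal - 1) ∂μ ≤ 0 := by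
    rw [integral_sub Measure.integrable_toReal_rnDeriv (integrable_const 1)]
    simp only [integral_const, measure_univ, ENNReal.toReal_one, probReal_univ, smul_eq_mul, one_mul]
    have := Measure.setIntegral_toReal_rnDeriv_le (μ := ν) (ν := μ) (s := Set.univ)
      (measure_ne_top ν _)
    rw [setIntegral_univ] at this
    simp only [measure_univ, ENNReal.toReal_one, probReal_univ] at this
    linarith
  rw [integral_neg] at h3
  linarith

/-- Relative entropy (Kullback–Leibler divergence) of `γ` with respect to `θ`:
`∫ log (dγ/dθ) dγ` if `γ ≪ θ` and the log-likelihood ratio is `γ`-integrable,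
and `+∞` otherwise. -/
noncomputable def relEntropy {V : Type*} [MeasurableSpace V] (γ θ : Measure V) : EReal :=
  if γ ≪ θ ∧ Integrable (llr γ θ) γ then ((∫ x, llr γ θ x ∂γ : ℝ) : EReal) else ⊤

/-- Variational representation of exponential integrals:
`−log ∫ e^{−f} dθ = inf_{γ ∈ 𝒫(V)} { R(γ‖θ) + ∫ f dγ }`. -/
theorem neg_log_integral_exp_neg_eq_iInf_relEntropy_add_integral
    {V : Type*} [MeasurableSpace V] (θ : Measure V) [IsProbabilityMeasure θ]
    (f : V → ℝ) (hf : Measurable f) (hbdd : ∃ Cb : ℝ, ∀ x, |f x| ≤ Cb) :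
    ((-Real.log (∫ x, Real.exp (-f x) ∂θ) : ℝ) : EReal) =
      ⨅ (γ : Measure V) (_ : IsProbabilityMeasure γ),
        relEntropy γ θ + ((∫ x, f x ∂γ : ℝ) : EReal) := by
  obtain ⟨Cb, hCb⟩ := hbdd
  -- integrability of exp(-f) and of f wrt any finite measure
  have hexp_int : Integrable (fun x ↦ Real.exp (-f x)) θ := by
    refine Integrable.mono' (integrable_const (Real.exp Cb)) (hf.neg.exp.aestronglyMeasurable) ?_
    filter_upwards with x
    rw [Real.norm_eq_abs, Real.abs_exp]
    exact Real.exp_le_exp.mpr (le_trans (neg_le_abs _) (hCb x))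
  have hf_int : ∀ (γ : Measure V) [IsFiniteMeasure γ], Integrable f γ := by
    intro γ _
    exact Integrable.mono' (integrable_const Cb) hf.aestronglyMeasurable
      (Filter.Eventually.of_forall hCb)
  set Z := ∫ x, Real.exp (-f x) ∂θ with hZ
  have hZpos : 0 < Z := integral_exp_pos hexp_int
  set μs : Measure V := θ.tilted (fun x ↦ -f x) with hμs
  have hPμs : IsProbabilityMeasure μs := isProbabilityMeasure_tilted hexp_int
  have hμs_ac : μs ≪ θ := tilted_absolutelyContinuous θ _
  have hθ_ac : θ ≪ μs := absolutelyContinuous_tilted hexp_int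
  -- llr μs θ
  have hllr : llr μs θ =ᵐ[μs] fun x ↦ -f x - Real.log Z := by
    have h := llr_tilted_left (μ := θ) (ν := θ) (f := fun x ↦ -f x)
      Measure.AbsolutelyContinuous.rfl hexp_int hf.neg.aemeasurable
    have h0 : llr θ θ =ᵐ[θ] 0 := by
      filter_upwards [Measure.rnDeriv_self θ] with x hx
      simp [llr, hx]
    refine hμs_ac.ae_le ?_
    filter_upwards [h, h0] with x hx hx0
    simp only [hμs, hx, hx0, Pi.zero_apply, add_zero, hZ]
  apply le_antisymm
  · -- lower bound: each term ≥ -log Z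
    refine le_iInf fun γ ↦ le_iInf fun hγ ↦ ?_
    by_cases hc : γ ≪ θ ∧ Integrable (llr γ θ) γ
    · obtain ⟨hac, hint⟩ := hc
      rw [relEntropy, if_pos ⟨hac, hint⟩, ← EReal.coe_add, EReal.coe_le_coe_iff]
      have hγμs : γ ≪ μs := hac.trans hθ_ac
      have hint' : Integrable (llr γ μs) γ :=
        integrable_llr_tilted_right hac (hf_int γ).neg hint hexp_int
      have hkey : ∫ x, llr γ μs x ∂γ
          = ∫ x, llr γ θ x ∂γ - ∫ x, -f x ∂γ + Real.log Z :=
        integral_llr_tilted_right hac (hf_int γ).neg hexp_int hint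
      have hpos := gibbs hγμs hint'
      rw [hkey, integral_neg] at hpos
      linarith
    · rw [relEntropy, if_neg hc]
      simp
  · -- upper bound: value at μs
    have hμs_int : Integrable (llr μs θ) μs := by
      rw [integrable_congr hllr]
      exact ((hf_int μs).neg.sub (integrable_const _))
    have hval : ∫ x, llr μs θ x ∂μs = -∫ x, f x ∂μs - Real.log Z := by
      have h1 : Integrable (fun x ↦ -f x) μs := (hf_int μs).neg
      rw [integral_congr_ae hllr, integral_sub h1 (integrable_const _), integral_neg]
      simp
    refine (iInf_le _ μs).trans ((iInf_le _ hPμs).trans ?_)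
    rw [relEntropy, if_pos ⟨hμs_ac, hμs_int⟩, ← EReal.coe_add]
    have : ∫ x, llr μs θ x ∂μs + ∫ x, f x ∂μs = -Real.log Z := by rw [hval]; ring
    rw [this]
end

section
/- Fix N ∈ ℕ and let g_n, g ∈ S^N be such that for every continuous compactly supported function φ : X_T → ℝ one has ∫_{X_T} φ(t,v) g_n(t,v) ν_T(dt,dv) → ∫_{X_T} φ(t,v) g(t,v) ν_T(dt,dv) as n → ∞. Let h : X_T → ℝ be measurable with ∫_{X_T} |h(t,v)|² ν_T(dt,dv) < ∞ and such that for every δ > 0 and every Borel set E ⊆ X_T with ν_T(E) < ∞ one has ∫_E e^{δ |h(t,v)|} ν_T(dt,dv) < ∞. Then ∫_{X_T} h(t,v) (g_n(t,v) − 1) ν_T(dt,dv) → ∫_{X_T} h(t,v) (g(t,v) − 1) ν_T(dt,dv) as n → ∞. -/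
open MeasureTheory Real Filter
open scoped ENNReal


section PtAux

lemma aux_l_nonneg {y : ℝ} (hy : 0 ≤ y) : 0 ≤ y * log y - y + 1 := by
  rcases eq_or_lt_of_le hy with rfl | hy
  · simp
  · have h1 : log y⁻¹ ≤ y⁻¹ - 1 := Real.log_le_sub_one_of_pos (by positivity)
    rw [Real.log_inv] at h1
    nlinarith [mul_le_mul_of_nonneg_left h1 hy.le, mul_inv_cancel₀ (ne_of_gt hy)]

lemma aux_young {x y : ℝ} (hy : 0 ≤ y) : x * y ≤ (y * log y - y + 1) + (exp x - 1) := by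
  rcases eq_or_lt_of_le hy with rfl | hy
  · simp only [mul_zero, Real.log_zero, zero_mul, zero_sub, neg_add_cancel]
    linarith [Real.exp_pos x]
  · have h1 : x - log y + 1 ≤ exp (x - log y) := Real.add_one_le_exp _
    rw [Real.exp_sub, Real.exp_log hy] at h1
    have h0 := mul_le_mul_of_nonneg_left h1 hy.le
    have h2 : y * (exp x / y) = exp x := by field_simp
    nlinarith

lemma aux_exp_le_quad {x : ℝ} (hx : |x| ≤ 1) : exp x ≤ 1 + x + x ^ 2 := by
  have := Real.exp_bound hx (n := 2) (by norm_num)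
  have h2 : ∑ i ∈ Finset.range 2, x ^ i / (Nat.factorial i : ℝ) = 1 + x := by
    simp [Finset.sum_range_succ, Nat.factorial]
  rw [h2] at this
  have h3 : |x| ^ 2 * ((2 + 1 : ℕ) / ((Nat.factorial 2 : ℕ) * 2) : ℝ) = x ^ 2 * (3/4) := by
    rw [sq_abs]; norm_num [Nat.factorial]
  nlinarith [sq_abs x, abs_le.mp this, sq_nonneg x]

lemma aux_quad_bound {x y : ℝ} (hx : |x| ≤ 1) (hy : 0 ≤ y) :
    |x| * |y - 1| ≤ (y * log y - y + 1) + x ^ 2 := by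
  rcases le_or_gt 1 y with h1 | h1
  · have := aux_young (x := |x|) hy
    have he : exp |x| ≤ 1 + |x| + x ^ 2 := by
      simpa [sq_abs] using aux_exp_le_quad (x := |x|) (by simpa using hx)
    rw [abs_of_nonneg (by linarith : (0:ℝ) ≤ y - 1)]
    nlinarith [abs_nonneg x]
  · have := aux_young (x := -|x|) hy
    have he : exp (-|x|) ≤ 1 + (-|x|) + x ^ 2 := by
      have h2 : |(-|x|)| ≤ 1 := by simpa using hx
      simpa [sq_abs] using aux_exp_le_quad (x := -|x|) h2
    rw [abs_of_nonpos (by linarith : y - 1 ≤ 0)]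
    nlinarith [abs_nonneg x]

lemma aux_P1 {q y a : ℝ} (hq : 0 ≤ q) (hy : 0 ≤ y) (ha : 0 < a) :
    q * |y - 1| ≤ (1/a) * ((y * log y - y + 1) + (exp (a*q) - 1)) + q := by
  have hy2 := aux_young (x := a * q) hy
  have habs : |y - 1| ≤ y + 1 := by
    rcases le_or_gt 1 y with h | h
    · rw [abs_of_nonneg (by linarith)]; linarith
    · rw [abs_of_nonpos (by linarith)]; linarith
  have h3 : q * |y - 1| ≤ q * y + q := by nlinarith
  have h4 : q * y ≤ (1/a) * ((y * log y - y + 1) + (exp (a*q) - 1)) := by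
    rw [div_mul_eq_mul_div, le_div_iff₀ ha]; nlinarith
  linarith

lemma aux_P2 {q y t : ℝ} (hq : 0 ≤ q) (hy : 0 ≤ y) (ht : 0 < t) (h1 : t * q ≤ 1) :
    q * |y - 1| ≤ (1/t) * (y * log y - y + 1) + t * q ^ 2 := by
  have hq2 := aux_quad_bound (x := t * q) (by rwa [abs_of_nonneg (by positivity)]) hy
  rw [abs_of_nonneg (by positivity)] at hq2
  rw [div_mul_eq_mul_div]
  have h2 : (t*q) * |y-1| ≤ (y * log y - y + 1) + (t*q)^2 := hq2
  have hmain : q * |y-1| ≤ ((y * log y - y + 1) + (t*q)^2)/t := by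
    rw [le_div_iff₀ ht]; nlinarith
  have h3 : ((y * log y - y + 1) + (t*q)^2)/t = (y * log y - y + 1)/t + t * q^2 := by
    field_simp
  rw [h3] at hmain
  rw [one_mul]
  linarith

lemma aux_exp_sub_one_le {x c : ℝ} (hx : 0 ≤ x) (hc : x ≤ c) : exp x - 1 ≤ exp c * x := by
  have h1 : 1 - x ≤ exp (-x) := by linarith [Real.add_one_le_exp (-x)]
  have h2 := mul_le_mul_of_nonneg_left h1 (Real.exp_pos x).le
  rw [← Real.exp_add] at h2
  simp at h2
  have h3 : exp x ≤ exp c := Real.exp_le_exp.2 hc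
  nlinarith [Real.exp_pos x, (Real.exp_pos c).le]

lemma aux_clamp_dist {M w x : ℝ} (hw : |w| ≤ M) : |w - max (-M) (min M x)| ≤ |w - x| := by
  obtain ⟨h1, h2⟩ := abs_le.mp hw
  rcases le_total x (-M) with hx | hx
  · rw [min_eq_right (by linarith), max_eq_left (by linarith)]
    rw [abs_of_nonneg (by linarith), abs_of_nonneg (by linarith)]
    linarith
  · rcases le_total M x with hx2 | hx2
    · rw [min_eq_left hx2, max_eq_right (by linarith)]
      rw [abs_of_nonpos (by linarith), abs_of_nonpos (by linarith)]
      linarith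
    · rw [min_eq_right hx2, max_eq_right hx]

end PtAux


section IntAux

variable {α : Type*} [MeasurableSpace α] {μ : Measure α} {g f : α → ℝ}

lemma aux_lint_young (hgm : Measurable g) (hg0 : ∀ p, 0 ≤ g p) (hfm : Measurable f)
    {a : ℝ} (ha : 0 < a) :
    ∫⁻ p, ENNReal.ofReal (|f p| * |g p - 1|) ∂μ ≤
      ENNReal.ofReal (1/a) * ((∫⁻ p, ENNReal.ofReal (g p * Real.log (g p) - g p + 1) ∂μ)
        + ∫⁻ p, ENNReal.ofReal (Real.exp (a * |f p|) - 1) ∂μ)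
      + ∫⁻ p, ENNReal.ofReal (|f p|) ∂μ := by
  have hlm : Measurable fun p => ENNReal.ofReal (g p * Real.log (g p) - g p + 1) :=
    (((hgm.mul (Real.measurable_log.comp hgm)).sub hgm).add measurable_const).ennreal_ofReal
  have hem : Measurable fun p => ENNReal.ofReal (Real.exp (a * |f p|) - 1) :=
    ((Real.measurable_exp.comp (measurable_const.mul hfm.abs)).sub measurable_const).ennreal_ofReal
  calc ∫⁻ p, ENNReal.ofReal (|f p| * |g p - 1|) ∂μ
      ≤ ∫⁻ p, (ENNReal.ofReal (1/a) * (ENNReal.ofReal (g p * Real.log (g p) - g p + 1)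
          + ENNReal.ofReal (Real.exp (a * |f p|) - 1)) + ENNReal.ofReal (|f p|)) ∂μ := by
        apply lintegral_mono fun p => ?_
        have h1 := aux_P1 (abs_nonneg (f p)) (hg0 p) ha
        have hl := aux_l_nonneg (hg0 p)
        have he : (0:ℝ) ≤ Real.exp (a * |f p|) - 1 := by
          have : (1:ℝ) ≤ Real.exp (a * |f p|) := Real.one_le_exp (by positivity)
          linarith
        calc ENNReal.ofReal (|f p| * |g p - 1|)
            ≤ ENNReal.ofReal ((1/a) * ((g p * Real.log (g p) - g p + 1) + (Real.exp (a * |f p|) - 1)) + |f p|) :=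
              ENNReal.ofReal_le_ofReal h1
          _ = _ := by
              rw [ENNReal.ofReal_add (by positivity) (abs_nonneg _),
                ENNReal.ofReal_mul (by positivity), ENNReal.ofReal_add hl he]
    _ = _ := by
        rw [lintegral_add_right _ hfm.abs.ennreal_ofReal,
          lintegral_const_mul _ (f := fun p => ENNReal.ofReal (g p * Real.log (g p) - g p + 1) + ENNReal.ofReal (Real.exp (a * |f p|) - 1)) (hlm.add hem), lintegral_add_left hlm]

lemma aux_lint_quad (hgm : Measurable g) (hg0 : ∀ p, 0 ≤ g p) (hfm : Measurable f)
    {t : ℝ} (ht : 0 < t) (hb : ∀ p, t * |f p| ≤ 1) :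
    ∫⁻ p, ENNReal.ofReal (|f p| * |g p - 1|) ∂μ ≤
      ENNReal.ofReal (1/t) * (∫⁻ p, ENNReal.ofReal (g p * Real.log (g p) - g p + 1) ∂μ)
      + ENNReal.ofReal t * ∫⁻ p, ENNReal.ofReal (f p ^ 2) ∂μ := by
  have hlm : Measurable fun p => ENNReal.ofReal (g p * Real.log (g p) - g p + 1) :=
    (((hgm.mul (Real.measurable_log.comp hgm)).sub hgm).add measurable_const).ennreal_ofReal
  calc ∫⁻ p, ENNReal.ofReal (|f p| * |g p - 1|) ∂μ
      ≤ ∫⁻ p, (ENNReal.ofReal (1/t) * ENNReal.ofReal (g p * Real.log (g p) - g p + 1)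
          + ENNReal.ofReal t * ENNReal.ofReal (f p ^ 2)) ∂μ := by
        apply lintegral_mono fun p => ?_
        have h1 := aux_P2 (abs_nonneg (f p)) (hg0 p) ht (hb p)
        have hl := aux_l_nonneg (hg0 p)
        calc ENNReal.ofReal (|f p| * |g p - 1|)
            ≤ ENNReal.ofReal ((1/t) * (g p * Real.log (g p) - g p + 1) + t * |f p| ^ 2) :=
              ENNReal.ofReal_le_ofReal h1
          _ = _ := by
              rw [ENNReal.ofReal_add (by positivity) (by positivity),
                ENNReal.ofReal_mul (by positivity), ENNReal.ofReal_mul ht.le, sq_abs]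
    _ = _ := by
        rw [lintegral_add_left (hlm.const_mul _), lintegral_const_mul _ hlm,
          lintegral_const_mul _ (hfm.pow_const 2).ennreal_ofReal]

lemma aux_meas_gt_lt_top {h : α → ℝ} (hmeas : Measurable h)
    (hsq : ∫⁻ p, ENNReal.ofReal (|h p| ^ 2) ∂μ < ⊤) {c : ℝ} (hc : 0 < c) :
    μ {p | c < |h p|} < ⊤ := by
  have hsub : {p | c < |h p|} ⊆ {p | ENNReal.ofReal (c^2) ≤ ENNReal.ofReal (|h p|^2)} := by
    intro p hp
    have hp' : c < |h p| := hp
    exact ENNReal.ofReal_le_ofReal (by nlinarith [abs_nonneg (h p)])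
  have hmark := mul_meas_ge_le_lintegral₀ (μ := μ)
    ((hmeas.abs.pow_const 2).ennreal_ofReal.aemeasurable) (ENNReal.ofReal (c^2))
  have hX : ENNReal.ofReal (c^2) ≠ 0 := by
    simp only [ne_eq, ENNReal.ofReal_eq_zero, not_le]; positivity
  calc μ {p | c < |h p|} ≤ μ {p | ENNReal.ofReal (c^2) ≤ ENNReal.ofReal (|h p|^2)} :=
        measure_mono hsub
    _ ≤ (∫⁻ p, ENNReal.ofReal (|h p|^2) ∂μ) / ENNReal.ofReal (c^2) :=
        (ENNReal.le_div_iff_mul_le (Or.inl hX) (Or.inl ENNReal.ofReal_ne_top)).mpr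
          (by rwa [mul_comm])
    _ < ⊤ := ENNReal.div_lt_top hsq.ne hX

lemma aux_lint_g_on_fin {g : α → ℝ} (hg0 : ∀ p, 0 ≤ g p) {N : ℕ}
    (hgN : (∫⁻ p, ENNReal.ofReal (g p * Real.log (g p) - g p + 1) ∂μ) ≤ (N : ℝ≥0∞))
    {K : Set α} (hKfin : μ K < ⊤) :
    ∫⁻ p in K, ENNReal.ofReal (g p) ∂μ < ⊤ := by
  have hpt : ∀ p, ENNReal.ofReal (g p) ≤
      ENNReal.ofReal (g p * Real.log (g p) - g p + 1) + ENNReal.ofReal (Real.exp 1 - 1) := by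
    intro p
    rw [← ENNReal.ofReal_add (aux_l_nonneg (hg0 p)) (by nlinarith [Real.exp_one_gt_d9])]
    apply ENNReal.ofReal_le_ofReal
    have h1 := aux_young (x := 1) (hg0 p)
    rw [one_mul] at h1
    linarith
  calc ∫⁻ p in K, ENNReal.ofReal (g p) ∂μ
      ≤ ∫⁻ p in K, (ENNReal.ofReal (g p * Real.log (g p) - g p + 1)
          + ENNReal.ofReal (Real.exp 1 - 1)) ∂μ := lintegral_mono hpt
    _ = (∫⁻ p in K, ENNReal.ofReal (g p * Real.log (g p) - g p + 1) ∂μ)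
        + ENNReal.ofReal (Real.exp 1 - 1) * μ K := by
        rw [lintegral_add_right _ measurable_const, lintegral_const,
          Measure.restrict_apply_univ]
    _ ≤ (N : ℝ≥0∞) + ENNReal.ofReal (Real.exp 1 - 1) * μ K :=
        add_le_add_left (le_trans (setLIntegral_le_lintegral _ _) hgN) _
    _ < ⊤ := by
        apply ENNReal.add_lt_top.2
        exact ⟨ENNReal.natCast_lt_top N, ENNReal.mul_lt_top ENNReal.ofReal_lt_top hKfin⟩

end IntAux


set_option maxHeartbeats 2000000 in
lemma aux_key_approx {α : Type*} [TopologicalSpace α] [PolishSpace α] [LocallyCompactSpace α]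
    [MeasurableSpace α] [BorelSpace α]
    (μ : Measure α) [IsFiniteMeasureOnCompacts μ] [SigmaFinite μ]
    (N : ℕ) (h : α → ℝ) (hmeas : Measurable h)
    (hsq : ∫⁻ p, ENNReal.ofReal (|h p| ^ 2) ∂μ < ⊤)
    (hexp : ∀ δ : ℝ, 0 < δ → ∀ E : Set α, MeasurableSet E → μ E < ⊤ →
      ∫⁻ p in E, ENNReal.ofReal (Real.exp (δ * |h p|)) ∂μ < ⊤)
    {ε : ℝ} (hε : 0 < ε) :
    ∃ φ : α → ℝ, Continuous φ ∧ HasCompactSupport φ ∧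
      ∀ g : α → ℝ, Measurable g → (∀ p, 0 ≤ g p) →
        (∫⁻ p, ENNReal.ofReal (g p * Real.log (g p) - g p + 1) ∂μ) ≤ (N : ℝ≥0∞) →
        ∫⁻ p, ENNReal.ofReal (|h p - φ p| * |g p - 1|) ∂μ ≤ ENNReal.ofReal ε := by
  set ε8 : ℝ := ε/8 with hε8def
  have hε8 : 0 < ε8 := by positivity
  set a : ℝ := ((N:ℝ)+1)/ε8 with hadef
  have ha : 0 < a := by positivity
  have haN : ENNReal.ofReal (1/a) * (N:ℝ≥0∞) ≤ ENNReal.ofReal ε8 := by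
    rw [← ENNReal.ofReal_natCast, ← ENNReal.ofReal_mul (by positivity)]
    apply ENNReal.ofReal_le_ofReal
    rw [hadef, one_div_div, div_mul_eq_mul_div, div_le_iff₀ (by positivity)]
    nlinarith [Nat.cast_nonneg (α := ℝ) N]
  -- choice of β (the small-values threshold) via a finite measure
  set d : α → ℝ≥0∞ := fun p => ENNReal.ofReal (|h p|^2) with hddef
  have hdm : Measurable d := (hmeas.abs.pow_const 2).ennreal_ofReal
  set ρ : Measure α := μ.withDensity d with hρdef
  haveI hρfin : IsFiniteMeasure ρ := by
    constructor
    rw [hρdef, withDensity_apply _ MeasurableSet.univ, Measure.restrict_univ]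
    simpa [hddef] using hsq
  have hAmeas : ∀ k : ℕ, MeasurableSet {p | 0 < |h p| ∧ |h p| < 1/((k:ℝ)+1)} := fun k =>
    (measurableSet_lt measurable_const hmeas.abs).inter
      (measurableSet_lt hmeas.abs measurable_const)
  have hAanti : Antitone (fun k : ℕ => {p | 0 < |h p| ∧ |h p| < 1/((k:ℝ)+1)}) := by
    intro k m hkm p hp
    refine ⟨hp.1, lt_of_lt_of_le hp.2 ?_⟩
    apply one_div_le_one_div_of_le (by positivity)
    exact_mod_cast by exact_mod_cast add_le_add_left (Nat.cast_le.2 hkm) 1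
  have hAempty : ⋂ k : ℕ, {p | 0 < |h p| ∧ |h p| < 1/((k:ℝ)+1)} = ∅ := by
    ext p
    simp only [Set.mem_iInter, Set.mem_setOf_eq, Set.mem_empty_iff_false, iff_false, not_forall]
    by_cases h0 : h p = 0
    · exact ⟨0, fun hc => absurd h0 (abs_pos.1 hc.1).elim⟩
    · obtain ⟨k, hk⟩ := exists_nat_gt (1/|h p|)
      refine ⟨k, fun hc => ?_⟩
      have h1 : 0 < |h p| := hc.1
      have h2 : 1/|h p| < (k:ℝ)+1 := by linarith
      have h3 : 1/((k:ℝ)+1) < |h p| := by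
        rw [div_lt_iff₀ (by positivity)]
        rw [div_lt_iff₀ h1] at h2
        linarith
      linarith [hc.2]
  have htend : Tendsto (fun k : ℕ => ρ {p | 0 < |h p| ∧ |h p| < 1/((k:ℝ)+1)}) atTop (nhds 0) := by
    have := tendsto_measure_iInter_atTop (μ := ρ)
      (fun k => (hAmeas k).nullMeasurableSet) hAanti ⟨0, (measure_lt_top ρ _).ne⟩
    rwa [hAempty, measure_empty] at this
  have hbound_pos : (0:ℝ≥0∞) < ENNReal.ofReal ε8 / ENNReal.ofReal a :=
    ENNReal.div_pos (by simp [ENNReal.ofReal_eq_zero]; positivity) ENNReal.ofReal_ne_top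
  obtain ⟨k, hk1, hk2⟩ : ∃ k : ℕ, a ≤ (k:ℝ)+1 ∧
      ρ {p | 0 < |h p| ∧ |h p| < 1/((k:ℝ)+1)} < ENNReal.ofReal ε8 / ENNReal.ofReal a := by
    have h1 : ∀ᶠ k : ℕ in atTop,
        ρ {p | 0 < |h p| ∧ |h p| < 1/((k:ℝ)+1)} < ENNReal.ofReal ε8 / ENNReal.ofReal a :=
      htend.eventually_lt_const hbound_pos
    have h2 : ∀ᶠ k : ℕ in atTop, a ≤ (k:ℝ)+1 := by
      filter_upwards [eventually_ge_atTop (Nat.ceil a)] with k hk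
      calc a ≤ (Nat.ceil a : ℝ) := Nat.le_ceil a
        _ ≤ (k:ℝ) := Nat.cast_le.2 hk
        _ ≤ (k:ℝ)+1 := by linarith
    exact (h2.and h1).exists
  set β : ℝ := 1/((k:ℝ)+1) with hβdef
  have hβpos : 0 < β := by positivity
  have hβa : a * β ≤ 1 := by
    rw [hβdef, mul_one_div, div_le_one (by positivity)]
    exact hk1
  have hβ1 : β ≤ 1 := by
    rw [hβdef, div_le_one (by positivity)]
    linarith [Nat.cast_nonneg (α := ℝ) k]
  set Su : Set α := {p | 0 < |h p| ∧ |h p| < β} with hSudef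
  have hSum : MeasurableSet Su := hAmeas k
  set u : α → ℝ := Su.indicator h with hudef
  have hum : Measurable u := hmeas.indicator hSum
  -- choice of M (the large-values threshold)
  set E1 : Set α := {p | 1 < |h p|} with hE1def
  have hE1m : MeasurableSet E1 := measurableSet_lt measurable_const hmeas.abs
  have hE1fin : μ E1 < ⊤ := aux_meas_gt_lt_top hmeas hsq one_pos
  have hC : ∫⁻ p in E1, ENNReal.ofReal (Real.exp ((2*a) * |h p|)) ∂μ < ⊤ :=
    hexp (2*a) (by positivity) E1 hE1m hE1fin
  set C : ℝ≥0∞ := ∫⁻ p in E1, ENNReal.ofReal (Real.exp ((2*a) * |h p|)) ∂μ with hCdef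
  set Ct : ℝ := C.toReal with hCtdef
  have hCeq : C = ENNReal.ofReal Ct := (ENNReal.ofReal_toReal hC.ne).symm
  have hCt0 : 0 ≤ Ct := ENNReal.toReal_nonneg
  set Iht : ℝ := (∫⁻ p, ENNReal.ofReal (|h p| ^ 2) ∂μ).toReal with hIhtdef
  have hIheq : (∫⁻ p, ENNReal.ofReal (|h p| ^ 2) ∂μ) = ENNReal.ofReal Iht :=
    (ENNReal.ofReal_toReal hsq.ne).symm
  have hIht0 : 0 ≤ Iht := ENNReal.toReal_nonneg
  set M : ℝ := max 1 (max ((|Real.log (ε8*a/(Ct+1))|)/a + 1) (Iht/ε8)) with hMdef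
  have hM1 : 1 ≤ M := le_max_left _ _
  have hM0 : 0 < M := lt_of_lt_of_le one_pos hM1
  have hMexp : Real.exp (-(a*M)) ≤ ε8*a/(Ct+1) := by
    have hr : 0 < ε8*a/(Ct+1) := by positivity
    have h1 : (|Real.log (ε8*a/(Ct+1))|)/a + 1 ≤ M :=
      le_trans (le_max_left _ _) (le_max_right _ _)
    have h2 : -(a*M) ≤ Real.log (ε8*a/(Ct+1)) := by
      have h3 := mul_le_mul_of_nonneg_left h1 ha.le
      have h4 : a * ((|Real.log (ε8*a/(Ct+1))|)/a + 1) = |Real.log (ε8*a/(Ct+1))| + a := by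
        field_simp
      rw [h4] at h3
      nlinarith [neg_abs_le (Real.log (ε8*a/(Ct+1))), abs_nonneg (Real.log (ε8*a/(Ct+1)))]
    calc Real.exp (-(a*M)) ≤ Real.exp (Real.log (ε8*a/(Ct+1))) := Real.exp_le_exp.2 h2
      _ = ε8*a/(Ct+1) := Real.exp_log hr
  have hMC : ENNReal.ofReal (1/a) * (ENNReal.ofReal (Real.exp (-(a*M))) * C) ≤
      ENNReal.ofReal ε8 := by
    rw [hCeq, ← ENNReal.ofReal_mul (by positivity), ← ENNReal.ofReal_mul (by positivity)]
    apply ENNReal.ofReal_le_ofReal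
    have h1 : Real.exp (-(a*M)) * Ct ≤ (ε8*a/(Ct+1)) * Ct :=
      mul_le_mul_of_nonneg_right hMexp hCt0
    have h2 : (1/a) * ((ε8*a/(Ct+1)) * Ct) ≤ ε8 := by
      have he : (1/a) * ((ε8*a/(Ct+1)) * Ct) = ε8*Ct/(Ct+1) := by
        field_simp
      rw [he, div_le_iff₀ (by positivity)]
      nlinarith
    calc (1/a) * (Real.exp (-(a*M)) * Ct) ≤ (1/a) * ((ε8*a/(Ct+1)) * Ct) := by
          apply mul_le_mul_of_nonneg_left h1 (by positivity)
      _ ≤ ε8 := h2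
  have hMI : ENNReal.ofReal (1/M) * (∫⁻ p, ENNReal.ofReal (|h p| ^ 2) ∂μ) ≤
      ENNReal.ofReal ε8 := by
    rw [hIheq, ← ENNReal.ofReal_mul (by positivity)]
    apply ENNReal.ofReal_le_ofReal
    have h1 : Iht/ε8 ≤ M := le_trans (le_max_right _ _) (le_max_right _ _)
    rw [one_div, inv_mul_eq_div, div_le_iff₀ hM0]
    rw [div_le_iff₀ hε8] at h1
    nlinarith
  set Sv : Set α := {p | M < |h p|} with hSvdef
  have hSvm : MeasurableSet Sv := measurableSet_lt measurable_const hmeas.abs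
  set v : α → ℝ := Sv.indicator h with hvdef
  have hvm : Measurable v := hmeas.indicator hSvm
  -- the middle piece
  set Sw : Set α := {p | β ≤ |h p| ∧ |h p| ≤ M} with hSwdef
  have hSwm : MeasurableSet Sw :=
    (measurableSet_le measurable_const hmeas.abs).inter
      (measurableSet_le hmeas.abs measurable_const)
  set w : α → ℝ := Sw.indicator h with hwdef
  have hwm : Measurable w := hmeas.indicator hSwm
  have hwabs : ∀ p, |w p| ≤ M := by
    intro p
    by_cases hp : p ∈ Sw
    · rw [hwdef, Set.indicator_of_mem hp]; exact hp.2
    · rw [hwdef, Set.indicator_of_notMem hp]; simpa using hM0.le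
  have hwfin : μ {p | β/2 < |h p|} < ⊤ := aux_meas_gt_lt_top hmeas hsq (by positivity)
  have hwInt : Integrable w μ := by
    refine ⟨hwm.aestronglyMeasurable, ?_⟩
    rw [hasFiniteIntegral_iff_norm]
    calc ∫⁻ p, ENNReal.ofReal ‖w p‖ ∂μ
        ≤ ∫⁻ p, {p | β/2 < |h p|}.indicator (fun _ => ENNReal.ofReal M) p ∂μ := by
          apply lintegral_mono fun p => ?_
          by_cases hp : p ∈ Sw
          · have hp2 : p ∈ {p | β/2 < |h p|} := by
              have : β ≤ |h p| := hp.1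
              show β/2 < |h p|
              linarith
            rw [Set.indicator_of_mem hp2, Real.norm_eq_abs]
            exact ENNReal.ofReal_le_ofReal (hwabs p)
          · rw [hwdef, Set.indicator_of_notMem hp]
            simp
      _ = ENNReal.ofReal M * μ {p | β/2 < |h p|} := by
          rw [lintegral_indicator (measurableSet_lt measurable_const hmeas.abs),
            setLIntegral_const]
      _ < ⊤ := ENNReal.mul_lt_top ENNReal.ofReal_lt_top hwfin
  -- continuous compactly supported approximation of w
  set η : ℝ := ε8 / (Real.exp (2*a*M) + 1) with hηdef
  have hη : 0 < η := by positivity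
  obtain ⟨φ₀, hφ₀supp, hφ₀close, hφ₀cont, -⟩ :=
    hwInt.exists_hasCompactSupport_lintegral_sub_le (ε := ENNReal.ofReal η)
      (ENNReal.ofReal_pos.2 hη).ne'
  set φ : α → ℝ := fun p => max (-M) (min M (φ₀ p)) with hφdef
  have hφcont : Continuous φ := continuous_const.max (continuous_const.min hφ₀cont)
  have hφsupp : HasCompactSupport φ := by
    have h0 : (fun x : ℝ => max (-M) (min M x)) 0 = 0 := by
      simp [min_eq_right hM0.le, max_eq_right (by linarith : -M ≤ (0:ℝ))]
    exact hφ₀supp.comp_left (g := fun x : ℝ => max (-M) (min M x)) h0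
  have hφabs : ∀ p, |φ p| ≤ M := by
    intro p
    rw [abs_le]
    constructor
    · exact le_max_left _ _
    · exact max_le (by linarith) (min_le_left _ _)
  have hr1 : ∫⁻ p, ENNReal.ofReal (|w p - φ p|) ∂μ ≤ ENNReal.ofReal η := by
    refine le_trans (lintegral_mono fun p => ?_) hφ₀close
    rw [← ofReal_norm_eq_enorm, Real.norm_eq_abs]
    exact ENNReal.ofReal_le_ofReal (aux_clamp_dist (hwabs p))
  have hrabs : ∀ p, |w p - φ p| ≤ 2*M := by
    intro p
    calc |w p - φ p| ≤ |w p| + |φ p| := abs_sub _ _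
      _ ≤ 2*M := by linarith [hwabs p, hφabs p]
  -- decomposition of h
  have hsum : ∀ p, h p - φ p = u p + v p + (w p - φ p) := by
    intro p
    have hh : h p = u p + v p + w p := by
      by_cases h1 : p ∈ Su
      · have h1' : |h p| < β := h1.2
        have hnv : p ∉ Sv := by
          intro hc
          have : M < |h p| := hc
          linarith
        have hnw : p ∉ Sw := by
          intro hc
          have : β ≤ |h p| := hc.1
          linarith
        rw [hudef, hvdef, hwdef, Set.indicator_of_mem h1, Set.indicator_of_notMem hnv,
          Set.indicator_of_notMem hnw]
        ring
      · by_cases h2 : p ∈ Sv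
        · have h2' : M < |h p| := h2
          have hnw : p ∉ Sw := by
            intro hc
            have : |h p| ≤ M := hc.2
            linarith
          rw [hudef, hvdef, hwdef, Set.indicator_of_notMem h1, Set.indicator_of_mem h2,
            Set.indicator_of_notMem hnw]
          ring
        · by_cases h3 : p ∈ Sw
          · rw [hudef, hvdef, hwdef, Set.indicator_of_notMem h1, Set.indicator_of_notMem h2,
              Set.indicator_of_mem h3]
            ring
          · have h0 : h p = 0 := by
              by_contra h0
              have habs : 0 < |h p| := abs_pos.2 h0
              rcases lt_or_ge (|h p|) β with hc1 | hc1
              · exact h1 ⟨habs, hc1⟩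
              rcases le_or_gt (|h p|) M with hc2 | hc2
              · exact h3 ⟨hc1, hc2⟩
              · exact h2 hc2
            rw [hudef, hvdef, hwdef, Set.indicator_of_notMem h1, Set.indicator_of_notMem h2,
              Set.indicator_of_notMem h3, h0]
            ring
    linarith
  refine ⟨φ, hφcont, hφsupp, fun g hgm hg0 hgN => ?_⟩
  -- the three pieces
  have hub : ∀ p, a * |u p| ≤ 1 := by
    intro p
    by_cases hp : p ∈ Su
    · rw [hudef, Set.indicator_of_mem hp]
      have hp2 : |h p| < β := hp.2
      nlinarith
    · rw [hudef, Set.indicator_of_notMem hp]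
      simp
  have hu2 : (∫⁻ p, ENNReal.ofReal (u p ^ 2) ∂μ) = ρ Su := by
    rw [hρdef, withDensity_apply _ hSum, ← lintegral_indicator hSum]
    apply lintegral_congr
    intro p
    simp only [hudef, hddef, Set.indicator_apply]
    split_ifs with hp
    · rw [sq_abs]
    · simp
  have hu_bound : ∫⁻ p, ENNReal.ofReal (|u p| * |g p - 1|) ∂μ ≤
      ENNReal.ofReal ε8 + ENNReal.ofReal ε8 := by
    refine le_trans (aux_lint_quad hgm hg0 hum ha hub) (add_le_add ?_ ?_)
    · exact le_trans (mul_le_mul_right hgN _) haN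
    · rw [hu2]
      calc ENNReal.ofReal a * ρ Su
          ≤ ENNReal.ofReal a * (ENNReal.ofReal ε8 / ENNReal.ofReal a) :=
            mul_le_mul_right hk2.le _
        _ ≤ ENNReal.ofReal ε8 := ENNReal.mul_div_le
  have hIE : ∫⁻ p, ENNReal.ofReal (Real.exp (a * |v p|) - 1) ∂μ ≤
      ENNReal.ofReal (Real.exp (-(a*M))) * C := by
    have hpt : ∀ p, ENNReal.ofReal (Real.exp (a * |v p|) - 1) ≤
        E1.indicator (fun p => ENNReal.ofReal (Real.exp (-(a*M))) *
          ENNReal.ofReal (Real.exp ((2*a) * |h p|))) p := by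
      intro p
      by_cases hp : p ∈ Sv
      · have hpM : M < |h p| := hp
        have hpE1 : p ∈ E1 := by
          show 1 < |h p|
          linarith
        rw [Set.indicator_of_mem hpE1, hvdef, Set.indicator_of_mem hp,
          ← ENNReal.ofReal_mul (Real.exp_nonneg _)]
        apply ENNReal.ofReal_le_ofReal
        rw [← Real.exp_add]
        have hexp1 : Real.exp (a * |h p|) - 1 ≤ Real.exp (a * |h p|) := by
          linarith [Real.exp_pos (a * |h p|)]
        refine le_trans hexp1 (Real.exp_le_exp.2 ?_)
        nlinarith
      · rw [hvdef, Set.indicator_of_notMem hp]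
        simp only [abs_zero, mul_zero, Real.exp_zero, sub_self, ENNReal.ofReal_zero]
        exact zero_le
    calc ∫⁻ p, ENNReal.ofReal (Real.exp (a * |v p|) - 1) ∂μ
        ≤ ∫⁻ p, E1.indicator (fun p => ENNReal.ofReal (Real.exp (-(a*M))) *
            ENNReal.ofReal (Real.exp ((2*a) * |h p|))) p ∂μ := lintegral_mono hpt
      _ = ∫⁻ p in E1, ENNReal.ofReal (Real.exp (-(a*M))) *
            ENNReal.ofReal (Real.exp ((2*a) * |h p|)) ∂μ := lintegral_indicator hE1m _
      _ = ENNReal.ofReal (Real.exp (-(a*M))) * C := by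
          have hexpm : Measurable (fun p => ENNReal.ofReal (Real.exp ((2*a) * |h p|))) :=
            (Real.measurable_exp.comp (measurable_const.mul hmeas.abs)).ennreal_ofReal
          rw [hCdef, lintegral_const_mul _ hexpm]
  have hIv1 : ∫⁻ p, ENNReal.ofReal (|v p|) ∂μ ≤
      ENNReal.ofReal (1/M) * (∫⁻ p, ENNReal.ofReal (|h p| ^ 2) ∂μ) := by
    rw [← lintegral_const_mul _ ((hmeas.abs.pow_const 2).ennreal_ofReal)]
    apply lintegral_mono fun p => ?_
    by_cases hp : p ∈ Sv
    · have hpM : M < |h p| := hp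
      rw [hvdef, Set.indicator_of_mem hp, ← ENNReal.ofReal_mul (by positivity)]
      apply ENNReal.ofReal_le_ofReal
      rw [one_div, inv_mul_eq_div, le_div_iff₀ hM0]
      nlinarith [abs_nonneg (h p)]
    · rw [hvdef, Set.indicator_of_notMem hp]
      simp
  have hv_bound : ∫⁻ p, ENNReal.ofReal (|v p| * |g p - 1|) ∂μ ≤
      (ENNReal.ofReal ε8 + ENNReal.ofReal ε8) + ENNReal.ofReal ε8 := by
    refine le_trans (aux_lint_young hgm hg0 hvm ha) (add_le_add ?_ ?_)
    · rw [mul_add]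
      refine add_le_add (le_trans (mul_le_mul_right hgN _) haN) ?_
      exact le_trans (mul_le_mul_right hIE _) hMC
    · exact le_trans hIv1 hMI
  -- w piece
  have hrm : Measurable (fun p => w p - φ p) := hwm.sub hφcont.measurable
  have hIR : ∫⁻ p, ENNReal.ofReal (Real.exp (a * |w p - φ p|) - 1) ∂μ ≤
      ENNReal.ofReal (a * Real.exp (2*a*M)) * ∫⁻ p, ENNReal.ofReal (|w p - φ p|) ∂μ := by
    rw [← lintegral_const_mul _ (hrm.abs.ennreal_ofReal)]
    apply lintegral_mono fun p => ?_
    rw [← ENNReal.ofReal_mul (by positivity)]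
    apply ENNReal.ofReal_le_ofReal
    have h1 : a * |w p - φ p| ≤ 2*a*M := by
      have := hrabs p
      nlinarith
    have h2 := aux_exp_sub_one_le (x := a * |w p - φ p|) (by positivity) h1
    calc Real.exp (a * |w p - φ p|) - 1 ≤ Real.exp (2*a*M) * (a * |w p - φ p|) := h2
      _ = a * Real.exp (2*a*M) * |w p - φ p| := by ring
  have hw_bound : ∫⁻ p, ENNReal.ofReal (|w p - φ p| * |g p - 1|) ∂μ ≤
      ENNReal.ofReal ε8 + ENNReal.ofReal ε8 := by
    refine le_trans (aux_lint_young hgm hg0 hrm ha) ?_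
    have h1 : ENNReal.ofReal (1/a) * ((∫⁻ p, ENNReal.ofReal (g p * Real.log (g p) - g p + 1) ∂μ)
        + ∫⁻ p, ENNReal.ofReal (Real.exp (a * |w p - φ p|) - 1) ∂μ) ≤
        ENNReal.ofReal ε8 + ENNReal.ofReal (Real.exp (2*a*M) * η) := by
      rw [mul_add]
      refine add_le_add (le_trans (mul_le_mul_right hgN _) haN) ?_
      calc ENNReal.ofReal (1/a) * ∫⁻ p, ENNReal.ofReal (Real.exp (a * |w p - φ p|) - 1) ∂μ
          ≤ ENNReal.ofReal (1/a) * (ENNReal.ofReal (a * Real.exp (2*a*M)) * ENNReal.ofReal η) :=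
            mul_le_mul_right (le_trans hIR (mul_le_mul_right hr1 _)) _
        _ = ENNReal.ofReal ((1/a) * (a * Real.exp (2*a*M)) * η) := by
            rw [← ENNReal.ofReal_mul (by positivity), ← ENNReal.ofReal_mul (by positivity)]
            congr 1
            ring
        _ = ENNReal.ofReal (Real.exp (2*a*M) * η) := by
            congr 1
            field_simp
      -- end
    calc _ ≤ (ENNReal.ofReal ε8 + ENNReal.ofReal (Real.exp (2*a*M) * η)) + ENNReal.ofReal η :=
          add_le_add h1 hr1
      _ = ENNReal.ofReal ε8 + ENNReal.ofReal (Real.exp (2*a*M) * η + η) := by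
          rw [add_assoc, ← ENNReal.ofReal_add (by positivity) hη.le]
      _ ≤ ENNReal.ofReal ε8 + ENNReal.ofReal ε8 := by
          apply add_le_add_right
          apply ENNReal.ofReal_le_ofReal
          have hd : Real.exp (2*a*M) * η + η = ε8 := by
            rw [hηdef]
            field_simp
          linarith
  -- combine the three pieces
  have htri : ∀ p, ENNReal.ofReal (|h p - φ p| * |g p - 1|) ≤
      ENNReal.ofReal (|u p| * |g p - 1|) + ENNReal.ofReal (|v p| * |g p - 1|)
      + ENNReal.ofReal (|w p - φ p| * |g p - 1|) := by
    intro p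
    rw [← ENNReal.ofReal_add (by positivity) (by positivity),
      ← ENNReal.ofReal_add (by positivity) (by positivity)]
    apply ENNReal.ofReal_le_ofReal
    have h1 : |h p - φ p| ≤ |u p| + |v p| + |w p - φ p| := by
      rw [hsum p]
      exact le_trans (abs_add_le _ _) (add_le_add_left (abs_add_le _ _) _)
    have h2 := mul_le_mul_of_nonneg_right h1 (abs_nonneg (g p - 1))
    have h3 : (|u p| + |v p| + |w p - φ p|) * |g p - 1| =
        |u p| * |g p - 1| + |v p| * |g p - 1| + |w p - φ p| * |g p - 1| := by ring
    linarith
  calc ∫⁻ p, ENNReal.ofReal (|h p - φ p| * |g p - 1|) ∂μ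
      ≤ ∫⁻ p, (ENNReal.ofReal (|u p| * |g p - 1|) + ENNReal.ofReal (|v p| * |g p - 1|)
          + ENNReal.ofReal (|w p - φ p| * |g p - 1|)) ∂μ := lintegral_mono htri
    _ = (∫⁻ p, ENNReal.ofReal (|u p| * |g p - 1|) ∂μ)
        + (∫⁻ p, ENNReal.ofReal (|v p| * |g p - 1|) ∂μ)
        + ∫⁻ p, ENNReal.ofReal (|w p - φ p| * |g p - 1|) ∂μ := by
        rw [lintegral_add_right _ (g := fun p => ENNReal.ofReal (|w p - φ p| * |g p - 1|)) ((hrm.abs.mul (hgm.sub measurable_const).abs).ennreal_ofReal),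
          lintegral_add_right _ (g := fun p => ENNReal.ofReal (|v p| * |g p - 1|)) ((hvm.abs.mul (hgm.sub measurable_const).abs).ennreal_ofReal)]
    _ ≤ (ENNReal.ofReal ε8 + ENNReal.ofReal ε8)
        + ((ENNReal.ofReal ε8 + ENNReal.ofReal ε8) + ENNReal.ofReal ε8)
        + (ENNReal.ofReal ε8 + ENNReal.ofReal ε8) :=
        add_le_add (add_le_add hu_bound hv_bound) hw_bound
    _ = 7 * ENNReal.ofReal ε8 := by ring
    _ ≤ ENNReal.ofReal ε := by
        have h7 : (7:ℝ≥0∞) * ENNReal.ofReal ε8 = ENNReal.ofReal (7*ε8) := by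
          rw [← ENNReal.ofReal_ofNat, ← ENNReal.ofReal_mul (by norm_num)]
        rw [h7]
        exact ENNReal.ofReal_le_ofReal (by rw [hε8def]; linarith)


/-- `L_T(g) = ∫_{X_T} (g log g − g + 1) dν_T` (with the convention `0 log 0 = 0`). -/
noncomputable def costLT {X : Type*} [MeasurableSpace X] (νT : Measure (ℝ × X))
    (g : ℝ × X → ℝ) : ℝ≥0∞ :=
  ∫⁻ p, ENNReal.ofReal (g p * Real.log (g p) - g p + 1) ∂νT

/-- `S^N`: the measurable functions `g : X_T → [0,∞)` with `L_T(g) ≤ N`. -/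
def SN {X : Type*} [MeasurableSpace X] (νT : Measure (ℝ × X)) (N : ℕ) :
    Set (ℝ × X → ℝ) :=
  {g | Measurable g ∧ (∀ p, 0 ≤ g p) ∧ costLT νT g ≤ (N : ℝ≥0∞)}

set_option maxHeartbeats 1000000 in
theorem tendsto_integral_mul_sub_one_of_weak_tendsto
    {X : Type*} [TopologicalSpace X] [PolishSpace X] [LocallyCompactSpace X]
    [MeasurableSpace X] [BorelSpace X]
    (ν : Measure X) [IsFiniteMeasureOnCompacts ν]
    (T : ℝ) (hT : 0 < T)
    (νT : Measure (ℝ × X)) (hνT : νT = (volume.restrict (Set.Icc 0 T)).prod ν)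
    (N : ℕ) (gn : ℕ → ℝ × X → ℝ) (g : ℝ × X → ℝ)
    (hgn : ∀ n, gn n ∈ SN νT N) (hg : g ∈ SN νT N)
    (hconv : ∀ φ : ℝ × X → ℝ, Continuous φ → HasCompactSupport φ →
      Tendsto (fun n => ∫ p, φ p * gn n p ∂νT) atTop (nhds (∫ p, φ p * g p ∂νT)))
    (h : ℝ × X → ℝ) (hmeas : Measurable h)
    (hsq : ∫⁻ p, ENNReal.ofReal (|h p| ^ 2) ∂νT < ⊤)
    (hexp : ∀ δ : ℝ, 0 < δ → ∀ E : Set (ℝ × X), MeasurableSet E → νT E < ⊤ →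
      ∫⁻ p in E, ENNReal.ofReal (Real.exp (δ * |h p|)) ∂νT < ⊤) :
    Tendsto (fun n => ∫ p, h p * (gn n p - 1) ∂νT) atTop
      (nhds (∫ p, h p * (g p - 1) ∂νT)) := by
  subst hνT
  set μ : Measure (ℝ × X) := (volume.restrict (Set.Icc 0 T)).prod ν with hμdef
  -- integrability of φ * (g' - 1) for continuous compactly supported φ
  have int1 : ∀ (φ : ℝ × X → ℝ), Continuous φ → HasCompactSupport φ →
      ∀ g' : ℝ × X → ℝ, g' ∈ SN μ N → Integrable (fun p => φ p * (g' p - 1)) μ := by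
    intro φ hφc hφs g' hg'
    obtain ⟨hm', h0', hN'⟩ := hg'
    have hN'' : (∫⁻ p, ENNReal.ofReal (g' p * Real.log (g' p) - g' p + 1) ∂μ) ≤ (N : ℝ≥0∞) := hN'
    obtain ⟨Cb, hCb⟩ := hφs.exists_bound_of_continuous hφc
    have hKm : MeasurableSet (tsupport φ) := (isClosed_tsupport φ).measurableSet
    have hKfin : μ (tsupport φ) < ⊤ := hφs.measure_lt_top
    have hgK : ∫⁻ p in tsupport φ, ENNReal.ofReal (g' p) ∂μ < ⊤ :=
      aux_lint_g_on_fin h0' hN'' hKfin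
    refine ⟨(hφc.measurable.mul (hm'.sub measurable_const)).aestronglyMeasurable, ?_⟩
    rw [hasFiniteIntegral_iff_norm]
    calc ∫⁻ p, ENNReal.ofReal ‖φ p * (g' p - 1)‖ ∂μ
        ≤ ∫⁻ p, (tsupport φ).indicator
            (fun p => ENNReal.ofReal (max Cb 0) * (ENNReal.ofReal (g' p) + 1)) p ∂μ := by
          apply lintegral_mono fun p => ?_
          by_cases hp : p ∈ tsupport φ
          · rw [Set.indicator_of_mem hp, Real.norm_eq_abs, abs_mul]
            have e1 : |φ p| ≤ max Cb 0 :=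
              le_trans (by simpa only [Real.norm_eq_abs] using hCb p) (le_max_left _ _)
            have e2 : |g' p - 1| ≤ g' p + 1 := by
              rcases le_or_gt 1 (g' p) with hc | hc
              · rw [abs_of_nonneg (by linarith)]; linarith
              · rw [abs_of_nonpos (by linarith)]; linarith [h0' p]
            calc ENNReal.ofReal (|φ p| * |g' p - 1|)
                ≤ ENNReal.ofReal ((max Cb 0) * (g' p + 1)) := ENNReal.ofReal_le_ofReal
                  (by nlinarith [abs_nonneg (φ p), abs_nonneg (g' p - 1), h0' p])
              _ = ENNReal.ofReal (max Cb 0) * ENNReal.ofReal (g' p + 1) :=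
                  ENNReal.ofReal_mul (le_max_right _ _)
              _ = ENNReal.ofReal (max Cb 0) * (ENNReal.ofReal (g' p) + 1) := by
                  rw [ENNReal.ofReal_add (h0' p) one_pos.le, ENNReal.ofReal_one]
          · rw [Set.indicator_of_notMem hp, image_eq_zero_of_notMem_tsupport hp]
            simp
      _ = ENNReal.ofReal (max Cb 0) *
            ((∫⁻ p in tsupport φ, ENNReal.ofReal (g' p) ∂μ) + μ (tsupport φ)) := by
          rw [lintegral_indicator hKm,
            lintegral_const_mul _ (f := fun p => ENNReal.ofReal (g' p) + 1) (hm'.ennreal_ofReal.add measurable_const),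
            lintegral_add_right _ measurable_const, setLIntegral_const, one_mul]
      _ < ⊤ := ENNReal.mul_lt_top ENNReal.ofReal_lt_top (ENNReal.add_lt_top.2 ⟨hgK, hKfin⟩)
  rw [Metric.tendsto_atTop]
  intro ε hε
  obtain ⟨φ, hφc, hφs, hφb'⟩ := aux_key_approx μ N h hmeas hsq hexp (ε := ε/4) (by positivity)
  have hφb : ∀ g' : ℝ × X → ℝ, g' ∈ SN μ N →
      ∫⁻ p, ENNReal.ofReal (|h p - φ p| * |g' p - 1|) ∂μ ≤ ENNReal.ofReal (ε/4) :=
    fun g' hg' => hφb' g' hg'.1 hg'.2.1 hg'.2.2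
  -- difference of integrals is small
  have hdiff : ∀ g' : ℝ × X → ℝ, g' ∈ SN μ N →
      |(∫ p, h p * (g' p - 1) ∂μ) - ∫ p, φ p * (g' p - 1) ∂μ| ≤ ε/4 := by
    intro g' hg'
    obtain ⟨hm', h0', hN'⟩ := hg'
    have hint1 : Integrable (fun p => φ p * (g' p - 1)) μ := int1 φ hφc hφs g' ⟨hm', h0', hN'⟩
    have hint2 : Integrable (fun p => h p * (g' p - 1)) μ := by
      refine ⟨(hmeas.mul (hm'.sub measurable_const)).aestronglyMeasurable, ?_⟩
      rw [hasFiniteIntegral_iff_norm]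
      have hpt : ∀ p, ENNReal.ofReal ‖h p * (g' p - 1)‖ ≤
          ENNReal.ofReal (|h p - φ p| * |g' p - 1|) + ENNReal.ofReal ‖φ p * (g' p - 1)‖ := by
        intro p
        rw [← ENNReal.ofReal_add (by positivity) (norm_nonneg _)]
        apply ENNReal.ofReal_le_ofReal
        rw [Real.norm_eq_abs, Real.norm_eq_abs, abs_mul, abs_mul]
        have e1 : |h p| ≤ |h p - φ p| + |φ p| := by
          have e0 : h p = (h p - φ p) + φ p := by ring
          rw [e0]
          exact le_trans (abs_add_le _ _) (by rw [← e0])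
        nlinarith [abs_nonneg (g' p - 1), abs_nonneg (h p - φ p), abs_nonneg (φ p)]
      calc ∫⁻ p, ENNReal.ofReal ‖h p * (g' p - 1)‖ ∂μ
          ≤ ∫⁻ p, (ENNReal.ofReal (|h p - φ p| * |g' p - 1|)
              + ENNReal.ofReal ‖φ p * (g' p - 1)‖) ∂μ := lintegral_mono hpt
        _ = (∫⁻ p, ENNReal.ofReal (|h p - φ p| * |g' p - 1|) ∂μ)
            + ∫⁻ p, ENNReal.ofReal ‖φ p * (g' p - 1)‖ ∂μ := by
            rw [lintegral_add_left (f := fun p => ENNReal.ofReal (|h p - φ p| * |g' p - 1|))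
              (((hmeas.sub hφc.measurable).abs.mul (hm'.sub measurable_const).abs).ennreal_ofReal)]
        _ < ⊤ := by
            apply ENNReal.add_lt_top.2
            constructor
            · exact lt_of_le_of_lt (hφb g' ⟨hm', h0', hN'⟩) ENNReal.ofReal_lt_top
            · have := hint1.2
              rwa [hasFiniteIntegral_iff_norm] at this
    rw [← integral_sub hint2 hint1]
    have heq : (fun p => h p * (g' p - 1) - φ p * (g' p - 1))
        = fun p => (h p - φ p) * (g' p - 1) := by funext p; ring
    rw [heq]
    calc |∫ p, (h p - φ p) * (g' p - 1) ∂μ| ≤ ∫ p, |(h p - φ p) * (g' p - 1)| ∂μ := by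
          simpa only [Real.norm_eq_abs] using
            norm_integral_le_integral_norm (μ := μ) (fun p => (h p - φ p) * (g' p - 1))
      _ = (∫⁻ p, ENNReal.ofReal (|(h p - φ p) * (g' p - 1)|) ∂μ).toReal := by
          rw [integral_eq_lintegral_of_nonneg_ae (f := fun p => |(h p - φ p) * (g' p - 1)|) (Eventually.of_forall fun p => abs_nonneg _)
            ((hmeas.sub hφc.measurable).mul (hm'.sub measurable_const)).abs.aestronglyMeasurable]
      _ ≤ ε/4 := by
          have hle : ∫⁻ p, ENNReal.ofReal (|(h p - φ p) * (g' p - 1)|) ∂μ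
              ≤ ENNReal.ofReal (ε/4) := by
            have := hφb g' ⟨hm', h0', hN'⟩
            simpa [abs_mul] using this
          exact le_trans (ENNReal.toReal_mono ENNReal.ofReal_ne_top hle)
            (ENNReal.toReal_ofReal (by positivity)).le
  -- convergence for the truncated test function
  have hφint : Integrable φ μ := hφc.integrable_of_hasCompactSupport hφs
  have heq2 : ∀ g' : ℝ × X → ℝ, g' ∈ SN μ N →
      ∫ p, φ p * (g' p - 1) ∂μ = (∫ p, φ p * g' p ∂μ) - ∫ p, φ p ∂μ := by
    intro g' hg'
    have hint1 : Integrable (fun p => φ p * (g' p - 1)) μ := int1 φ hφc hφs g' hg'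
    have hintg : Integrable (fun p => φ p * g' p) μ := by
      have hadd := hint1.add hφint
      refine hadd.congr (Eventually.of_forall fun p => ?_)
      simp only [Pi.add_apply]
      ring
    rw [← integral_sub hintg hφint]
    congr 1
    funext p
    ring
  have htt : Tendsto (fun n => ∫ p, φ p * (gn n p - 1) ∂μ) atTop
      (nhds (∫ p, φ p * (g p - 1) ∂μ)) := by
    have h1 := (hconv φ hφc hφs).sub_const (∫ p, φ p ∂μ)
    rw [heq2 g hg]
    exact h1.congr fun n => (heq2 (gn n) (hgn n)).symm
  obtain ⟨n₀, hn₀⟩ := Metric.tendsto_atTop.1 htt (ε/4) (by positivity)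
  refine ⟨n₀, fun n hn => ?_⟩
  have e1 := hdiff (gn n) (hgn n)
  have e2 := hdiff g hg
  have e3 := hn₀ n hn
  rw [Real.dist_eq] at e3 ⊢
  have t1 := abs_sub_le (∫ p, h p * (gn n p - 1) ∂μ) (∫ p, φ p * (gn n p - 1) ∂μ)
    (∫ p, h p * (g p - 1) ∂μ)
  have t2 := abs_sub_le (∫ p, φ p * (gn n p - 1) ∂μ) (∫ p, φ p * (g p - 1) ∂μ)
    (∫ p, h p * (g p - 1) ∂μ)
  have t3 : |(∫ p, φ p * (g p - 1) ∂μ) - ∫ p, h p * (g p - 1) ∂μ| ≤ ε/4 := by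
    rw [abs_sub_comm]
    exact e2
  linarith
end

section
/- For every N ∈ ℕ the set S^N is sequentially compact in the following sense: every sequence (g_n) in S^N admits a subsequence (g_{n_k}) and an element g ∈ S^N such that for every continuous compactly supported function φ : X_T → ℝ one has ∫_{X_T} φ(t,v) g_{n_k}(t,v) ν_T(dt,dv) → ∫_{X_T} φ(t,v) g(t,v) ν_T(dt,dv) as k → ∞. -/
open MeasureTheory Filter Topology
open scoped ENNReal NNReal RealInnerProductSpace


open MeasureTheory Filter Topology
open scoped ENNReal NNReal RealInnerProductSpace

namespace SNaux

noncomputable def l (r : ℝ) : ℝ := r * Real.log r - r + 1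

lemma l_nonneg {r : ℝ} (hr : 0 ≤ r) : 0 ≤ l r := by
  rcases eq_or_lt_of_le hr with h | h
  · simp [l, ← h]
  · have h1 : 1 - r⁻¹ ≤ Real.log r := Real.one_sub_inv_le_log_of_pos h
    have := mul_le_mul_of_nonneg_left h1 h.le
    have hrr : r * (1 - r⁻¹) = r - 1 := by field_simp
    unfold l; nlinarith
  
lemma l_young {r : ℝ} (hr : 0 ≤ r) (s : ℝ) : r * s - (Real.exp s - 1) ≤ l r := by
  rcases eq_or_lt_of_le hr with h | h
  · have := Real.exp_pos s; simp [l, ← h]; linarith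
  · have h1 : (s - Real.log r) + 1 ≤ Real.exp (s - Real.log r) := Real.add_one_le_exp _
    have h2 : r * ((s - Real.log r) + 1) ≤ r * Real.exp (s - Real.log r) :=
      mul_le_mul_of_nonneg_left h1 h.le
    have h3 : r * Real.exp (s - Real.log r) = Real.exp s := by
      rw [Real.exp_sub, Real.exp_log h]; field_simp
    unfold l; nlinarith
    
lemma l_monoOn : MonotoneOn l (Set.Ici 1) := by
  have hderiv : ∀ x ∈ interior (Set.Ici (1:ℝ)), HasDerivAt l (Real.log x) x := by
    intro x hx
    rw [interior_Ici] at hx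
    have hx1 : (1:ℝ) < x := hx
    have h1 : HasDerivAt (fun y : ℝ => y * Real.log y) (Real.log x + 1) x :=
      Real.hasDerivAt_mul_log (by positivity)
    have h2 : HasDerivAt (fun y : ℝ => y * Real.log y - y + 1)
        (Real.log x + 1 - 1) x := ((h1.sub (hasDerivAt_id x)).add_const 1)
    have hl : l = fun y : ℝ => y * Real.log y - y + 1 := rfl
    rw [hl]; convert h2 using 1; ring
  have hcont : ContinuousOn l (Set.Ici 1) := by
    apply ContinuousOn.add (ContinuousOn.sub ?_ continuousOn_id) continuousOn_const
    exact Real.continuous_mul_log.continuousOn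
  exact monotoneOn_of_deriv_nonneg (convex_Ici 1) hcont
    (fun x hx => (hderiv x hx).differentiableAt.differentiableWithinAt)
    (by intro x hx
        rw [(hderiv x hx).deriv]
        rw [interior_Ici] at hx
        exact Real.log_nonneg (le_of_lt hx))

lemma l_ge_self {r : ℝ} (hr : Real.exp 2 ≤ r) : r ≤ l r := by
  have h0 : (0:ℝ) < r := lt_of_lt_of_le (Real.exp_pos 2) hr
  have h1 : (2:ℝ) ≤ Real.log r := by
    rw [← Real.log_exp 2]; exact Real.log_le_log (Real.exp_pos 2) hr
  have : r * 2 ≤ r * Real.log r := mul_le_mul_of_nonneg_left h1 h0.le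
  unfold l; nlinarith

lemma l_mass {r : ℝ} (hr : 0 ≤ r) : r ≤ l r + Real.exp 2 := by
  rcases le_or_gt r (Real.exp 2) with h | h
  · have := l_nonneg hr; linarith
  · have := l_ge_self h.le; have := (Real.exp_pos 2); linarith

lemma l_tail {r M : ℝ} (hM : Real.exp 2 ≤ M) (hr : 0 ≤ r) :
    r - min r M ≤ l r / (Real.log M - 1) := by
  have hM1 : (1:ℝ) < Real.log M := by
    have : (2:ℝ) ≤ Real.log M := by
      rw [← Real.log_exp 2]; exact Real.log_le_log (Real.exp_pos 2) hM
    linarith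
  have hpos : 0 < Real.log M - 1 := by linarith
  rcases le_or_gt r M with h | h
  · rw [min_eq_left h]
    simp only [sub_self]
    exact div_nonneg (l_nonneg hr) hpos.le
  · rw [min_eq_right h.le, le_div_iff₀ hpos]
    have hMpos : (0:ℝ) < M := lt_of_lt_of_le (Real.exp_pos 2) hM
    have hlog : Real.log M ≤ Real.log r := Real.log_le_log hMpos h.le
    have h1 : r * (Real.log M - 1) ≤ r * (Real.log r - 1) := by nlinarith
    have h2 : (r - M) * (Real.log M - 1) ≤ r * (Real.log M - 1) := by nlinarith
    have h3 : r * (Real.log r - 1) ≤ l r := by unfold l; nlinarith [l_nonneg hr]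
    linarith

lemma l_min_le {r M : ℝ} (hM : 1 ≤ M) (hr : 0 ≤ r) : l (min r M) ≤ l r := by
  rcases le_or_gt r M with h | h
  · rw [min_eq_left h]
  · rw [min_eq_right h.le]
    exact l_monoOn hM (le_trans hM h.le) h.le

lemma l_le_one {r : ℝ} (hr : 0 ≤ r) (hr1 : r ≤ 1) : l r ≤ 1 := by
  have h1 : r * Real.log r ≤ 0 := by
    rcases eq_or_lt_of_le hr with h | h
    · simp [← h]
    · exact mul_nonpos_of_nonneg_of_nonpos h.le (Real.log_nonpos hr hr1)
  unfold l; linarith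

lemma l_continuous : Continuous l :=
  (Real.continuous_mul_log.sub continuous_id).add continuous_const

lemma costLT_eq {X : Type*} [MeasurableSpace X] (νT : Measure (ℝ × X))
    (g : ℝ × X → ℝ) : costLT νT g = ∫⁻ p, ENNReal.ofReal (l (g p)) ∂νT := rfl



/-- Weak sequential compactness of norm-bounded families in a separable real Hilbert
space, simultaneously for countably many sequences. -/
lemma hilbert_weak_compact {H : Type*} [NormedAddCommGroup H] [InnerProductSpace ℝ H]
    [CompleteSpace H] [TopologicalSpace.SeparableSpace H]
    (x : ℕ → ℕ → H) (C : ℕ → ℝ) (hx : ∀ M n, ‖x M n‖ ≤ C M) :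
    ∃ σ : ℕ → ℕ, StrictMono σ ∧ ∃ y : ℕ → H, (∀ M, ‖y M‖ ≤ C M) ∧
      ∀ (M : ℕ) (e : H), Tendsto (fun k => ⟪x M (σ k), e⟫) atTop (𝓝 ⟪y M, e⟫) := by
  have hC0 : ∀ M, 0 ≤ C M := fun M => le_trans (norm_nonneg _) (hx M 0)
  have : Nonempty H := ⟨0⟩
  set d : ℕ → H := TopologicalSpace.denseSeq H with hd
  have hdd : DenseRange d := TopologicalSpace.denseRange_denseSeq H
  -- the compact product set
  set s : Set (ℕ × ℕ → ℝ) :=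
    Set.pi Set.univ (fun Mj => Set.Icc (-(C Mj.1 * ‖d Mj.2‖)) (C Mj.1 * ‖d Mj.2‖)) with hs
  have hsc : IsCompact s := isCompact_univ_pi (fun Mj => isCompact_Icc)
  set F : ℕ → (ℕ × ℕ → ℝ) := fun n Mj => ⟪x Mj.1 n, d Mj.2⟫ with hF
  have hFs : ∀ n, F n ∈ s := by
    intro n Mj _
    have h1 : |⟪x Mj.1 n, d Mj.2⟫| ≤ ‖x Mj.1 n‖ * ‖d Mj.2‖ := abs_real_inner_le_norm _ _
    have h2 : ‖x Mj.1 n‖ * ‖d Mj.2‖ ≤ C Mj.1 * ‖d Mj.2‖ :=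
      mul_le_mul_of_nonneg_right (hx _ _) (norm_nonneg _)
    rw [Set.mem_Icc]
    constructor <;> [skip; skip] <;> cases' abs_le.mp (le_trans h1 h2) with h3 h4
    · exact h3
    · exact h4
  obtain ⟨L, hLs, σ, hσ, hconv⟩ := hsc.tendsto_subseq hFs
  refine ⟨σ, hσ, ?_⟩
  have hcoord : ∀ M j, Tendsto (fun k => ⟪x M (σ k), d j⟫) atTop (𝓝 (L (M, j))) := by
    intro M j
    have := (tendsto_pi_nhds.mp hconv) (M, j)
    exact this
  -- Cauchy for arbitrary e
  have hkey : ∀ (M : ℕ) (e : H), ∃ r : ℝ, Tendsto (fun k => ⟪x M (σ k), e⟫) atTop (𝓝 r) := by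
    intro M e
    have hcau : CauchySeq (fun k => ⟪x M (σ k), e⟫) := by
      rw [Metric.cauchySeq_iff]
      intro ε hε
      have hCpos : 0 < C M + 1 := by linarith [hC0 M]
      obtain ⟨j, hj⟩ : ∃ j, ‖e - d j‖ < ε / (4 * (C M + 1)) := by
        have := hdd.exists_dist_lt e (by positivity : (0:ℝ) < ε / (4 * (C M + 1)))
        obtain ⟨j, hj⟩ := this
        exact ⟨j, by rwa [dist_eq_norm] at hj⟩
      have hcj := hcoord M j
      rw [Metric.tendsto_atTop] at hcj
      obtain ⟨K0, hK0⟩ := hcj (ε / 4) (by positivity)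
      refine ⟨K0, fun m hm n hn => ?_⟩
      have bound : ∀ k, |⟪x M (σ k), e⟫ - ⟪x M (σ k), d j⟫| ≤ ε / 4 := by
        intro k
        have : ⟪x M (σ k), e⟫ - ⟪x M (σ k), d j⟫ = ⟪x M (σ k), e - d j⟫ := by
          rw [inner_sub_right]
        rw [this]
        calc |⟪x M (σ k), e - d j⟫| ≤ ‖x M (σ k)‖ * ‖e - d j‖ := abs_real_inner_le_norm _ _
          _ ≤ (C M + 1) * (ε / (4 * (C M + 1))) := by
              apply mul_le_mul (by linarith [hx M (σ k)]) hj.le (norm_nonneg _) (by linarith)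
          _ = ε / 4 := by field_simp
      have h1 := bound m
      have h2 := bound n
      have h3 := hK0 m hm
      have h4 := hK0 n hn
      rw [Real.dist_eq] at h3 h4 ⊢
      have : |⟪x M (σ m), e⟫ - ⟪x M (σ n), e⟫| ≤
          |⟪x M (σ m), e⟫ - ⟪x M (σ m), d j⟫| + |⟪x M (σ m), d j⟫ - L (M, j)| +
          (|⟪x M (σ n), e⟫ - ⟪x M (σ n), d j⟫| + |⟪x M (σ n), d j⟫ - L (M, j)|) := by
        have := abs_sub_abs_le_abs_sub (⟪x M (σ m), e⟫) (⟪x M (σ n), e⟫)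
        calc |⟪x M (σ m), e⟫ - ⟪x M (σ n), e⟫|
            = |(⟪x M (σ m), e⟫ - ⟪x M (σ m), d j⟫) + (⟪x M (σ m), d j⟫ - L (M, j)) +
              (-((⟪x M (σ n), e⟫ - ⟪x M (σ n), d j⟫) + (⟪x M (σ n), d j⟫ - L (M, j))))| := by
              ring_nf
          _ ≤ _ := by
              refine le_trans (abs_add_le _ _) ?_
              rw [abs_neg]
              exact add_le_add (abs_add_le _ _) (abs_add_le _ _)
      linarith
    obtain ⟨r, hr⟩ := cauchySeq_tendsto_of_complete hcau
    exact ⟨r, hr⟩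
  choose f hf using hkey
  -- f M is a bounded linear functional
  have hfbound : ∀ M e, |f M e| ≤ C M * ‖e‖ := by
    intro M e
    have : ∀ k, |⟪x M (σ k), e⟫| ≤ C M * ‖e‖ := fun k =>
      le_trans (abs_real_inner_le_norm _ _) (mul_le_mul_of_nonneg_right (hx _ _) (norm_nonneg _))
    have habs : Tendsto (fun k => |⟪x M (σ k), e⟫|) atTop (𝓝 |f M e|) := (hf M e).abs
    exact le_of_tendsto habs (Eventually.of_forall this)
  have hadd : ∀ M e e', f M (e + e') = f M e + f M e' := by
    intro M e e'
    have h1 : Tendsto (fun k => ⟪x M (σ k), e⟫ + ⟪x M (σ k), e'⟫) atTop (𝓝 (f M e + f M e')) :=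
      (hf M e).add (hf M e')
    have h2 : (fun k => ⟪x M (σ k), e + e'⟫) = fun k => ⟪x M (σ k), e⟫ + ⟪x M (σ k), e'⟫ := by
      funext k; rw [inner_add_right]
    exact tendsto_nhds_unique ((h2 ▸ hf M (e + e')) : _) h1
  have hsmul : ∀ M (c : ℝ) e, f M (c • e) = c * f M e := by
    intro M c e
    have h1 : Tendsto (fun k => c * ⟪x M (σ k), e⟫) atTop (𝓝 (c * f M e)) :=
      (hf M e).const_mul c
    have h2 : (fun k => ⟪x M (σ k), c • e⟫) = fun k => c * ⟪x M (σ k), e⟫ := by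
      funext k; rw [real_inner_smul_right]
    exact tendsto_nhds_unique ((h2 ▸ hf M (c • e)) : _) h1
  -- build linear functionals and use Riesz representation
  refine ⟨fun M => (InnerProductSpace.toDual ℝ H).symm
    (LinearMap.mkContinuous
      { toFun := f M, map_add' := hadd M, map_smul' := fun c e => by simpa using hsmul M c e }
      (C M) (fun e => by simpa [Real.norm_eq_abs] using hfbound M e)), ?_, ?_⟩
  · intro M
    rw [LinearIsometryEquiv.norm_map]
    exact LinearMap.mkContinuous_norm_le _ (hC0 M) _
  · intro M e
    have : ⟪(InnerProductSpace.toDual ℝ H).symm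
        (LinearMap.mkContinuous
          { toFun := f M, map_add' := hadd M, map_smul' := fun c e => by simpa using hsmul M c e }
          (C M) (fun e => by simpa [Real.norm_eq_abs] using hfbound M e)), e⟫ = f M e := by
      rw [InnerProductSpace.toDual_symm_apply]
      rfl
    rw [this]
    exact hf M e


end SNaux

open SNaux

set_option maxHeartbeats 1000000 in
set_option synthInstance.maxHeartbeats 400000 in
/-- Sequential compactness of `S^N` in the topology of weak convergence of the
measures `g dν_T` tested against continuous compactly supported functions. -/
theorem SN_seq_compact
    {X : Type*} [TopologicalSpace X] [PolishSpace X] [LocallyCompactSpace X]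
    [MeasurableSpace X] [BorelSpace X]
    (ν : Measure X) [IsFiniteMeasureOnCompacts ν]
    (T : ℝ) (hT : 0 < T)
    (νT : Measure (ℝ × X)) (hνT : νT = (volume.restrict (Set.Icc 0 T)).prod ν)
    (N : ℕ) (gn : ℕ → ℝ × X → ℝ) (hgn : ∀ n, gn n ∈ SN νT N) :
    ∃ (σ : ℕ → ℕ), StrictMono σ ∧ ∃ g ∈ SN νT N,
      ∀ φ : ℝ × X → ℝ, Continuous φ → HasCompactSupport φ →
        Tendsto (fun k => ∫ p, φ p * gn (σ k) p ∂νT) atTop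
          (nhds (∫ p, φ p * g p ∂νT)) := by
  classical
  haveI : IsFiniteMeasureOnCompacts νT := by rw [hνT]; infer_instance
  clear hνT hT
  obtain hgn_meas : ∀ n, Measurable (gn n) := fun n => (hgn n).1
  obtain hgn_nonneg : ∀ n p, 0 ≤ gn n p := fun n => (hgn n).2.1
  obtain hgn_cost : ∀ n, costLT νT (gn n) ≤ (N : ℝ≥0∞) := fun n => (hgn n).2.2
  -- compact exhaustion and measurable weight
  set K : CompactExhaustion (ℝ × X) := CompactExhaustion.choice (ℝ × X) with hK
  have hKmeas : ∀ n, MeasurableSet (K n) := fun n => (K.isCompact n).isClosed.measurableSet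
  have hfind_meas : Measurable (fun p => K.find p) := by
    apply measurable_to_countable'
    intro n
    match n with
    | 0 =>
        have : (fun p => K.find p) ⁻¹' {0} = K 0 := by
          ext p; simp only [Set.mem_preimage, Set.mem_singleton_iff]
          rw [← Nat.le_zero, ← K.mem_iff_find_le]
        rw [this]; exact hKmeas 0
    | (m+1) =>
        have : (fun p => K.find p) ⁻¹' {m+1} = K (m+1) \ K m := by
          ext p; simp only [Set.mem_preimage, Set.mem_singleton_iff, Set.mem_diff]
          rw [K.mem_iff_find_le, K.mem_iff_find_le]
          omega
        rw [this]; exact (hKmeas (m+1)).diff (hKmeas m)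
  set a : ℕ → ℝ≥0 := fun n => (2:ℝ≥0)⁻¹ ^ n * ((νT (K n)).toNNReal + 1)⁻¹ with ha
  have ha_pos : ∀ n, 0 < a n := by
    intro n; apply mul_pos (pow_pos (by norm_num) n)
    rw [pos_iff_ne_zero]
    simp
  set w : ℝ × X → ℝ≥0 := fun p => a (K.find p) with hw
  have hw_meas : Measurable w := by rw [hw]; exact Measurable.comp (f := fun p => K.find p) (g := a) measurable_from_nat hfind_meas
  have hw_pos : ∀ p, 0 < w p := fun p => ha_pos _
  have hw_int : ∫⁻ p, (w p : ℝ≥0∞) ∂νT < ∞ := by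
    have hwle : ∀ p, (w p : ℝ≥0∞) ≤ ∑' n, Set.indicator (K n) (fun _ => ((a n : ℝ≥0∞))) p := by
      intro p
      have hp : p ∈ K (K.find p) := K.mem_find p
      have h1 : Set.indicator (K (K.find p)) (fun _ => ((a (K.find p) : ℝ≥0∞))) p
          = (a (K.find p) : ℝ≥0∞) := Set.indicator_of_mem hp _
      calc (w p : ℝ≥0∞) = (a (K.find p) : ℝ≥0∞) := rfl
        _ = _ := h1.symm
        _ ≤ _ := ENNReal.le_tsum (f := fun n => Set.indicator (K n) (fun _ => ((a n : ℝ≥0∞))) p)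
            (K.find p)
    have hterm : ∀ n : ℕ, (a n : ℝ≥0∞) * νT (K n) ≤ (2⁻¹ : ℝ≥0∞) ^ n := by
      intro n
      have hfin : νT (K n) ≠ ∞ := (K.isCompact n).measure_lt_top.ne
      set t : ℝ≥0 := (νT (K n)).toNNReal with ht
      have hνt : νT (K n) = (t : ℝ≥0∞) := (ENNReal.coe_toNNReal hfin).symm
      have h2 : a n * t ≤ (2:ℝ≥0)⁻¹ ^ n := by
        have h3 : (t + 1)⁻¹ * t ≤ 1 := by
          calc (t + 1)⁻¹ * t ≤ (t + 1)⁻¹ * (t + 1) := by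
                exact mul_le_mul_right (by simp [le_add_iff_nonneg_right]) _
            _ = 1 := inv_mul_cancel₀ (by positivity)
        calc a n * t = (2:ℝ≥0)⁻¹ ^ n * ((t + 1)⁻¹ * t) := by rw [ha]; ring
          _ ≤ (2:ℝ≥0)⁻¹ ^ n * 1 := mul_le_mul_right h3 _
          _ = (2:ℝ≥0)⁻¹ ^ n := mul_one _
      calc (a n : ℝ≥0∞) * νT (K n) = ((a n * t : ℝ≥0) : ℝ≥0∞) := by
            rw [hνt, ← ENNReal.coe_mul]
        _ ≤ (((2:ℝ≥0)⁻¹ ^ n : ℝ≥0) : ℝ≥0∞) := ENNReal.coe_le_coe.mpr h2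
        _ = (2⁻¹ : ℝ≥0∞) ^ n := by
            rw [ENNReal.coe_pow, ENNReal.coe_inv (by norm_num)]
            norm_num
    calc ∫⁻ p, (w p : ℝ≥0∞) ∂νT
        ≤ ∫⁻ p, ∑' n, Set.indicator (K n) (fun _ => ((a n : ℝ≥0∞))) p ∂νT :=
          lintegral_mono hwle
      _ = ∑' n, ∫⁻ p, Set.indicator (K n) (fun _ => ((a n : ℝ≥0∞))) p ∂νT :=
          lintegral_tsum (fun n => (measurable_const.indicator (hKmeas n)).aemeasurable)
      _ = ∑' n, (a n : ℝ≥0∞) * νT (K n) := by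
          congr 1; funext n; exact lintegral_indicator_const (hKmeas n) _
      _ ≤ ∑' n, (2⁻¹ : ℝ≥0∞) ^ n := ENNReal.tsum_le_tsum hterm
      _ = (1 - 2⁻¹)⁻¹ := ENNReal.tsum_geometric _
      _ < ∞ := by norm_num
  have hw_lb : ∀ (C : Set (ℝ × X)), IsCompact C → ∃ c : ℝ≥0, 0 < c ∧ ∀ p ∈ C, c ≤ w p := by
    intro Cs hCs
    obtain ⟨m, hm⟩ := K.exists_superset_of_isCompact hCs
    refine ⟨(Finset.range (m+1)).inf' (⟨0, by simp⟩ : (Finset.range (m+1)).Nonempty) a, ?_, ?_⟩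
    · obtain ⟨i, _, hi⟩ := Finset.exists_mem_eq_inf' (⟨0, by simp⟩ : (Finset.range (m+1)).Nonempty) a
      rw [hi]; exact ha_pos i
    · intro p hp
      have hfle : K.find p ≤ m := K.mem_iff_find_le.mp (hm hp)
      exact Finset.inf'_le _ (by simp [Nat.lt_succ_iff, hfle])
  -- the finite reference measure μ
  set μ : Measure (ℝ × X) := νT.withDensity (fun p => (w p : ℝ≥0∞)) with hμ
  haveI : IsFiniteMeasure μ := isFiniteMeasure_withDensity hw_int.ne
  have hν_ac_μ : νT ≪ μ := withDensity_absolutelyContinuous'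
    (hw_meas.coe_nnreal_ennreal.aemeasurable)
    (Filter.Eventually.of_forall (fun p => by
      simp only [ne_eq, ENNReal.coe_eq_zero]
      exact (hw_pos p).ne'))
  have hμ_ac_ν : μ ≪ νT := withDensity_absolutelyContinuous _ _
  -- integral transfer
  have hμtoν : ∀ f : ℝ × X → ℝ, ∫ p, f p ∂μ = ∫ p, (w p : ℝ) * f p ∂νT := by
    intro f
    rw [hμ, integral_withDensity_eq_integral_smul hw_meas f]
    simp [NNReal.smul_def]
  -- truncations
  set u : ℕ → ℕ → ℝ × X → ℝ := fun n M p => min (gn n p) M with hu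
  have hu_meas : ∀ n M, Measurable (u n M) := fun n M => (hgn_meas n).min measurable_const
  have hu_nonneg : ∀ n M p, 0 ≤ u n M p := fun n M p => le_min (hgn_nonneg n p) (M.cast_nonneg)
  have hu_le : ∀ n M p, u n M p ≤ M := fun n M p => min_le_right _ _
  have hu_memℒ2 : ∀ n M, MemLp (u n M) 2 μ := by
    intro n M
    apply MemLp.of_bound (hu_meas n M).aestronglyMeasurable (M : ℝ)
    apply Filter.Eventually.of_forall
    intro p
    rw [Real.norm_eq_abs, abs_of_nonneg (hu_nonneg n M p)]
    exact hu_le n M p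
  set xLp : ℕ → ℕ → Lp ℝ 2 μ := fun M n => (hu_memℒ2 n M).toLp (u n M) with hxLp
  set C : ℕ → ℝ := fun M => ((μ Set.univ) ^ (2:ℝ≥0∞).toReal⁻¹ * ENNReal.ofReal M).toReal with hC
  have hxnorm : ∀ M n, ‖xLp M n‖ ≤ C M := by
    intro M n
    have h1 : ‖xLp M n‖ = (eLpNorm (u n M) 2 μ).toReal := by
      rw [hxLp]; exact Lp.norm_toLp _ _
    rw [h1, hC]
    apply ENNReal.toReal_mono
    · exact ENNReal.mul_ne_top
        (ENNReal.rpow_ne_top_of_nonneg (by positivity) (measure_ne_top μ _))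
        ENNReal.ofReal_ne_top
    · apply eLpNorm_le_of_ae_bound
      apply Filter.Eventually.of_forall
      intro p
      rw [Real.norm_eq_abs, abs_of_nonneg (hu_nonneg n M p)]
      exact hu_le n M p
  haveI : Fact ((1:ℝ≥0∞) ≤ 2) := ⟨one_le_two⟩
  haveI : Fact ((2:ℝ≥0∞) ≠ ∞) := ⟨by norm_num⟩
  haveI : MeasureTheory.IsSeparable μ := by infer_instance
  haveI : SecondCountableTopology (Lp ℝ 2 μ) := by infer_instance
  haveI : TopologicalSpace.SeparableSpace (Lp ℝ 2 μ) := by infer_instance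
  obtain ⟨σ, hσ, y, hynorm, hyconv⟩ := hilbert_weak_compact xLp C hxnorm
  -- measurable representatives of the weak limits
  set Y : ℕ → ℝ × X → ℝ := fun M => (Lp.aestronglyMeasurable (y M)).mk (y M) with hY
  have hY_meas : ∀ M, Measurable (Y M) :=
    fun M => (Lp.aestronglyMeasurable (y M)).stronglyMeasurable_mk.measurable
  have hY_ae : ∀ M, (y M : ℝ × X → ℝ) =ᵐ[μ] Y M :=
    fun M => (Lp.aestronglyMeasurable (y M)).ae_eq_mk
  -- pairing formula
  have hpairL : ∀ (F : Lp ℝ 2 μ) (f : ℝ × X → ℝ), ((F : ℝ × X → ℝ) =ᵐ[μ] f) →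
      ∀ (v : ℝ × X → ℝ) (hv : MemLp v 2 μ),
      ⟪F, hv.toLp v⟫ = ∫ p, f p * v p ∂μ := by
    intro F f hFf v hv
    rw [MeasureTheory.L2.inner_def]
    apply integral_congr_ae
    filter_upwards [hFf, hv.coeFn_toLp] with p h1 h2
    rw [h1, h2]
    simp [RCLike.inner_apply]; ring
  -- key convergence against compactly supported bounded measurable test functions
  have hconv_test : ∀ (M : ℕ) (v : ℝ × X → ℝ), Measurable v →
      (∃ (Cs : Set (ℝ × X)) (B : ℝ), IsCompact Cs ∧ (∀ p, p ∉ Cs → v p = 0) ∧ ∀ p, |v p| ≤ B) →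
      Tendsto (fun k => ∫ p, u (σ k) M p * v p ∂νT) atTop (𝓝 (∫ p, Y M p * v p ∂νT)) := by
    rintro M v hv_meas ⟨Cs, B, hCs, hvC, hvB⟩
    obtain ⟨c, hc, hcw⟩ := hw_lb Cs hCs
    have hcR : (0:ℝ) < (c:ℝ) := hc
    set ev : ℝ × X → ℝ := fun p => v p * ((w p : ℝ))⁻¹ with hev
    have hev_meas : Measurable ev :=
      hv_meas.mul ((measurable_coe_nnreal_real.comp hw_meas).inv)
    have hev_bd : ∀ p, |ev p| ≤ |B| * (c:ℝ)⁻¹ := by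
      intro p
      by_cases hp : p ∈ Cs
      · have h1 : |v p| ≤ |B| := (hvB p).trans (le_abs_self B)
        have hwR : (c:ℝ) ≤ ((w p : ℝ)) := by exact_mod_cast hcw p hp
        have h2 : ((w p : ℝ))⁻¹ ≤ (c:ℝ)⁻¹ := by
          apply inv_anti₀ hcR hwR
        rw [hev, abs_mul]
        apply mul_le_mul h1 ?_ (abs_nonneg _) (abs_nonneg _)
        rw [abs_of_nonneg (by positivity)]
        exact h2
      · have : v p = 0 := hvC p hp
        simp only [hev, this, zero_mul, abs_zero]
        positivity
    have hev2 : MemLp ev 2 μ := MemLp.of_bound hev_meas.aestronglyMeasurable _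
      (Filter.Eventually.of_forall fun p => by rw [Real.norm_eq_abs]; exact hev_bd p)
    have hkey : ∀ f : ℝ × X → ℝ, ∫ p, f p * ev p ∂μ = ∫ p, f p * v p ∂νT := by
      intro f
      rw [hμtoν]
      apply integral_congr_ae
      apply Filter.Eventually.of_forall
      intro p
      have hwne : (w p : ℝ) ≠ 0 := ne_of_gt (by exact_mod_cast hw_pos p)
      rw [hev]
      field_simp
    have h1 : ∀ k, ∫ p, u (σ k) M p * v p ∂νT = ⟪xLp M (σ k), hev2.toLp ev⟫ := fun k =>
      ((hpairL _ _ ((hu_memℒ2 _ M).coeFn_toLp) ev hev2).trans (hkey _)).symm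
    have h2 : ∫ p, Y M p * v p ∂νT = ⟪y M, hev2.toLp ev⟫ :=
      ((hpairL _ _ (hY_ae M) ev hev2).trans (hkey _)).symm
    rw [h2]
    exact (hyconv M (hev2.toLp ev)).congr (fun k => (h1 k).symm)
  -- convergence of set integrals with respect to μ
  have hconv_μ : ∀ (M : ℕ) (A : Set (ℝ × X)), MeasurableSet A →
      Tendsto (fun k => ∫ p in A, u (σ k) M p ∂μ) atTop (𝓝 (∫ p in A, Y M p ∂μ)) := by
    intro M A hA
    have hev2 : MemLp (A.indicator (fun _ => (1:ℝ))) 2 μ := by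
      apply MemLp.of_bound ((measurable_const.indicator hA).aestronglyMeasurable) 1
      apply Filter.Eventually.of_forall
      intro p
      rw [Real.norm_eq_abs]
      by_cases hp : p ∈ A <;> simp [hp]
    have hkey : ∀ f : ℝ × X → ℝ, ∫ p, f p * (A.indicator (fun _ => (1:ℝ)) p) ∂μ
        = ∫ p in A, f p ∂μ := by
      intro f
      rw [← integral_indicator hA]
      congr 1; funext p; by_cases hp : p ∈ A <;> simp [hp]
    have h1 : ∀ k, ∫ p in A, u (σ k) M p ∂μ = ⟪xLp M (σ k), hev2.toLp _⟫ := fun k =>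
      ((hpairL _ _ ((hu_memℒ2 _ M).coeFn_toLp) _ hev2).trans (hkey _)).symm
    have h2 : ∫ p in A, Y M p ∂μ = ⟪y M, hev2.toLp _⟫ :=
      ((hpairL _ _ (hY_ae M) _ hev2).trans (hkey _)).symm
    rw [h2]
    exact (hyconv M (hev2.toLp _)).congr (fun k => (h1 k).symm)
  have hY_int : ∀ M, Integrable (Y M) μ := by
    intro M
    refine Integrable.congr ?_ (hY_ae M)
    rw [← memLp_one_iff_integrable]
    exact (Lp.memLp (y M)).mono_exponent (by norm_num)
  -- a.e. properties of Y
  have hu_int : ∀ n M, Integrable (u n M) μ := fun n M =>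
    memLp_one_iff_integrable.mp ((hu_memℒ2 n M).mono_exponent (by norm_num))
  have hY_nonneg : ∀ M, 0 ≤ᵐ[μ] Y M := by
    intro M
    apply ae_nonneg_of_forall_setIntegral_nonneg (hY_int M)
    intro s hs _
    apply ge_of_tendsto (hconv_μ M s hs)
    apply Filter.Eventually.of_forall
    intro k
    exact setIntegral_nonneg hs (fun p _ => hu_nonneg _ M p)
  have hY_le : ∀ M : ℕ, Y M ≤ᵐ[μ] (fun _ => (M:ℝ)) := by
    intro M
    apply ae_le_of_forall_setIntegral_le (hY_int M) (integrable_const _)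
    intro s hs _
    apply le_of_tendsto (hconv_μ M s hs)
    apply Filter.Eventually.of_forall
    intro k
    exact setIntegral_mono_on (hu_int _ M).integrableOn (integrable_const _).integrableOn hs
      (fun p _ => hu_le _ M p)
  have hY_mono : ∀ M M' : ℕ, M ≤ M' → Y M ≤ᵐ[μ] Y M' := by
    intro M M' hMM'
    apply ae_le_of_forall_setIntegral_le (hY_int M) (hY_int M')
    intro s hs _
    apply le_of_tendsto_of_tendsto' (hconv_μ M s hs) (hconv_μ M' s hs)
    intro k
    apply setIntegral_mono_on (hu_int _ M).integrableOn (hu_int _ M').integrableOn hs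
    intro p _
    exact min_le_min le_rfl (Nat.cast_le.mpr hMM')
  -- good set and everywhere-monotone modification
  set E : Set (ℝ × X) :=
    ⋂ M : ℕ, {p | 0 ≤ Y M p} ∩ ({p | Y M p ≤ M} ∩ {p | Y M p ≤ Y (M+1) p}) with hE
  have hE_meas : MeasurableSet E := by
    apply MeasurableSet.iInter
    intro M
    exact (measurableSet_le measurable_const (hY_meas M)).inter
      ((measurableSet_le (hY_meas M) measurable_const).inter
        (measurableSet_le (hY_meas M) (hY_meas (M+1))))
  have hE_ae : ∀ᵐ p ∂μ, p ∈ E := by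
    rw [hE]
    simp only [Set.mem_iInter, Set.mem_inter_iff, Set.mem_setOf_eq]
    apply ae_all_iff.mpr
    intro M
    filter_upwards [hY_nonneg M, hY_le M, hY_mono M (M+1) (Nat.le_succ M)] with p h1 h2 h3
    exact ⟨h1, h2, h3⟩
  have hE_aeν : ∀ᵐ p ∂νT, p ∈ E := hν_ac_μ.ae_le hE_ae
  have hEmem : ∀ p ∈ E, ∀ M : ℕ, 0 ≤ Y M p ∧ Y M p ≤ M ∧ Y M p ≤ Y (M+1) p := by
    intro p hp M
    rw [hE] at hp
    simp only [Set.mem_iInter, Set.mem_inter_iff, Set.mem_setOf_eq] at hp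
    exact ⟨(hp M).1, (hp M).2.1, (hp M).2.2⟩
  set Z : ℕ → ℝ × X → ℝ := fun M => E.indicator (Y M) with hZdef
  have hZ_meas : ∀ M, Measurable (Z M) := fun M => (hY_meas M).indicator hE_meas
  have hZ_nonneg : ∀ M p, 0 ≤ Z M p := by
    intro M p
    by_cases hp : p ∈ E
    · simp only [hZdef]; rw [Set.indicator_of_mem hp]; exact (hEmem p hp M).1
    · simp only [hZdef]; rw [Set.indicator_of_notMem hp]
  have hZ_le : ∀ (M : ℕ) p, Z M p ≤ M := by
    intro M p
    by_cases hp : p ∈ E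
    · simp only [hZdef]; rw [Set.indicator_of_mem hp]; exact (hEmem p hp M).2.1
    · simp only [hZdef]; rw [Set.indicator_of_notMem hp]; positivity
  have hZ_mono : ∀ p, Monotone (fun M => Z M p) := by
    intro p
    apply monotone_nat_of_le_succ
    intro M
    by_cases hp : p ∈ E
    · simp only [hZdef, Set.indicator_of_mem hp]; exact (hEmem p hp M).2.2
    · simp only [hZdef, Set.indicator_of_notMem hp]; exact le_rfl
  have hZ_aeY : ∀ M, Z M =ᵐ[νT] Y M := by
    intro M
    filter_upwards [hE_aeν] with p hp
    simp only [hZdef]; rw [Set.indicator_of_mem hp]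
  -- integrability of l ∘ gn
  have hl_meas : ∀ n, Measurable (fun p => l (gn n p)) :=
    fun n => l_continuous.measurable.comp (hgn_meas n)
  have hl_lint : ∀ n, ∫⁻ p, ENNReal.ofReal (l (gn n p)) ∂νT ≤ (N : ℝ≥0∞) :=
    fun n => le_trans (le_of_eq (costLT_eq νT (gn n)).symm) (hgn_cost n)
  have hl_int : ∀ n, Integrable (fun p => l (gn n p)) νT := by
    intro n
    refine ⟨(hl_meas n).aestronglyMeasurable, ?_⟩
    rw [HasFiniteIntegral]
    have heq : ∀ p, (‖l (gn n p)‖₊ : ℝ≥0∞) = ENNReal.ofReal (l (gn n p)) :=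
      fun p => Real.enorm_eq_ofReal (l_nonneg (hgn_nonneg n p))
    calc ∫⁻ p, (‖l (gn n p)‖₊ : ℝ≥0∞) ∂νT = ∫⁻ p, ENNReal.ofReal (l (gn n p)) ∂νT := by
          apply lintegral_congr; exact heq
      _ ≤ (N : ℝ≥0∞) := hl_lint n
      _ < ∞ := ENNReal.natCast_lt_top N
  have hl_int_le : ∀ n, ∫ p, l (gn n p) ∂νT ≤ (N : ℝ) := by
    intro n
    have h1 : ENNReal.ofReal (∫ p, l (gn n p) ∂νT) ≤ (N : ℝ≥0∞) := by
      rw [ofReal_integral_eq_lintegral_ofReal (hl_int n)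
        (Filter.Eventually.of_forall fun p => l_nonneg (hgn_nonneg n p))]
      exact hl_lint n
    have h2 := ENNReal.toReal_mono (ENNReal.natCast_ne_top N) h1
    rw [ENNReal.toReal_ofReal (integral_nonneg fun p => l_nonneg (hgn_nonneg n p))] at h2
    simpa using h2
  -- bounded functions are integrable on compacts
  have hbdd_intOn : ∀ (f : ℝ × X → ℝ) (B : ℝ), Measurable f → (∀ p, |f p| ≤ B) →
      ∀ (Cs : Set (ℝ × X)), νT Cs < ∞ → IntegrableOn f Cs νT := by
    intro f B hf hB Cs hCs
    apply Integrable.mono' (integrableOn_const (C := B) (hCs).ne)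
      hf.aestronglyMeasurable
    exact Filter.Eventually.of_forall fun p => by rw [Real.norm_eq_abs]; exact hB p
  -- the uniform local mass bound
  have hmass : ∀ n (M : ℕ) (Cs : Set (ℝ × X)), MeasurableSet Cs → νT Cs < ∞ →
      ∫ p in Cs, u n M p ∂νT ≤ (N : ℝ) + Real.exp 2 * (νT Cs).toReal := by
    intro n M Cs hCsm hCsfin
    have hint1 : IntegrableOn (u n M) Cs νT := by
      apply hbdd_intOn _ (M : ℝ) (hu_meas n M) _ _ hCsfin
      intro p
      rw [abs_of_nonneg (hu_nonneg n M p)]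
      exact hu_le n M p
    have hint2 : IntegrableOn (fun p => l (gn n p) + Real.exp 2) Cs νT :=
      (hl_int n).integrableOn.add (integrableOn_const (hCsfin).ne)
    calc ∫ p in Cs, u n M p ∂νT ≤ ∫ p in Cs, (l (gn n p) + Real.exp 2) ∂νT := by
          apply setIntegral_mono_on hint1 hint2 hCsm
          intro p _
          exact le_trans (min_le_left _ _) (l_mass (hgn_nonneg n p))
      _ = ∫ p in Cs, l (gn n p) ∂νT + Real.exp 2 * (νT Cs).toReal := by
          rw [integral_add (hl_int n).integrableOn (integrableOn_const (hCsfin).ne)]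
          simp [Measure.restrict_apply_univ]
          rw [measureReal_def]; ring
      _ ≤ (N : ℝ) + Real.exp 2 * (νT Cs).toReal := by
          have h3 : ∫ p in Cs, l (gn n p) ∂νT ≤ ∫ p, l (gn n p) ∂νT :=
            setIntegral_le_integral (hl_int n)
              (Filter.Eventually.of_forall fun p => l_nonneg (hgn_nonneg n p))
          linarith [hl_int_le n]
  -- set-integral convergence with respect to νT on compacts
  have hconv_set : ∀ (M : ℕ) (Cs : Set (ℝ × X)), IsCompact Cs → MeasurableSet Cs →
      Tendsto (fun k => ∫ p in Cs, u (σ k) M p ∂νT) atTop (𝓝 (∫ p in Cs, Z M p ∂νT)) := by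
    intro M Cs hCs hCsm
    have h := hconv_test M (Cs.indicator fun _ => (1:ℝ)) (measurable_const.indicator hCsm)
      ⟨Cs, 1, hCs, (fun p hp => Set.indicator_of_notMem hp _),
        fun p => by by_cases hp : p ∈ Cs <;> simp [hp]⟩
    have hid : ∀ f : ℝ × X → ℝ,
        ∫ p, f p * (Cs.indicator (fun _ => (1:ℝ)) p) ∂νT = ∫ p in Cs, f p ∂νT := by
      intro f
      rw [← integral_indicator hCsm]
      congr 1; funext p; by_cases hp : p ∈ Cs <;> simp [hp]
    have heq : ∫ p, Y M p * (Cs.indicator (fun _ => (1:ℝ)) p) ∂νT = ∫ p in Cs, Z M p ∂νT := by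
      rw [hid]
      apply integral_congr_ae
      exact ae_restrict_of_ae ((hZ_aeY M).symm)
    rw [← heq]
    exact h.congr (fun k => hid (u (σ k) M))
  have hZmass : ∀ (M m : ℕ),
      ∫ p in K m, Z M p ∂νT ≤ (N : ℝ) + Real.exp 2 * (νT (K m)).toReal := by
    intro M m
    apply le_of_tendsto (hconv_set M (K m) (K.isCompact m) (hKmeas m))
    exact Filter.Eventually.of_forall fun k =>
      hmass (σ k) M (K m) (hKmeas m) (K.isCompact m).measure_lt_top
  -- the candidate limit density
  set G : ℝ × X → ℝ≥0∞ := fun p => ⨆ M : ℕ, ENNReal.ofReal (Z M p) with hG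
  have hG_meas : Measurable G := by
    apply Measurable.iSup
    intro M
    exact (hZ_meas M).ennreal_ofReal
  have hZ_intOn : ∀ (M m : ℕ), IntegrableOn (Z M) (K m) νT := by
    intro M m
    apply hbdd_intOn _ (M:ℝ) (hZ_meas M) _ _ (K.isCompact m).measure_lt_top
    intro p
    rw [abs_of_nonneg (hZ_nonneg M p)]
    exact hZ_le M p
  have hGK : ∀ m, ∫⁻ p in K m, G p ∂νT
      ≤ ENNReal.ofReal ((N : ℝ) + Real.exp 2 * (νT (K m)).toReal) := by
    intro m
    rw [hG]
    rw [lintegral_iSup (fun M => (hZ_meas M).ennreal_ofReal)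
      (fun M M' hMM' => fun p => ENNReal.ofReal_le_ofReal (hZ_mono p hMM'))]
    apply iSup_le
    intro M
    rw [← ofReal_integral_eq_lintegral_ofReal (hZ_intOn M m)
      (Filter.Eventually.of_forall fun p => hZ_nonneg M p)]
    exact ENNReal.ofReal_le_ofReal (hZmass M m)
  have hGfin : ∀ᵐ p ∂νT, G p < ∞ := by
    have h1 : ∀ m : ℕ, (νT.restrict (K m)) {p | ¬ G p < ∞} = 0 := by
      intro m
      have := ae_lt_top hG_meas (lt_of_le_of_lt (hGK m) ENNReal.ofReal_lt_top).ne
      rwa [ae_iff] at this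
    rw [ae_iff]
    have hGm : MeasurableSet {p | ¬ G p < ∞} := by
      have : {p | ¬ G p < ∞} = G ⁻¹' {∞} := by
        ext p; simp [lt_top_iff_ne_top]
      rw [this]
      exact hG_meas (measurableSet_singleton _)
    have hcov : {p | ¬ G p < ∞} ⊆ ⋃ m, ({p | ¬ G p < ∞} ∩ K m) := by
      intro p hp
      obtain ⟨m, hm⟩ := K.exists_mem p
      exact Set.mem_iUnion.mpr ⟨m, hp, hm⟩
    apply le_antisymm _ zero_le
    refine le_trans (measure_mono hcov) (le_trans (measure_iUnion_le _) ?_)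
    have hterm : ∀ m : ℕ, νT ({p | ¬ G p < ∞} ∩ K m) = 0 := by
      intro m
      have h2 : νT ({p | ¬ G p < ∞} ∩ K m) = (νT.restrict (K m)) {p | ¬ G p < ∞} := by
        rw [Measure.restrict_apply hGm]
      rw [h2, h1 m]
    have htz : ∑' m : ℕ, νT ({p | ¬ G p < ∞} ∩ K m) = 0 := by
      rw [tsum_congr hterm]; exact tsum_zero
    exact le_of_eq htz
  set g : ℝ × X → ℝ := fun p => (G p).toReal with hg
  have hg_meas : Measurable g := hG_meas.ennreal_toReal
  have hg_nonneg : ∀ p, 0 ≤ g p := fun p => ENNReal.toReal_nonneg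
  have hg_lim : ∀ᵐ p ∂νT, Tendsto (fun M => Z M p) atTop (𝓝 (g p)) ∧ ∀ M, Z M p ≤ g p := by
    filter_upwards [hGfin] with p hp
    have hbdd : ∀ M, Z M p ≤ (G p).toReal := by
      intro M
      have h1 : ENNReal.ofReal (Z M p) ≤ G p := le_iSup (fun M => ENNReal.ofReal (Z M p)) M
      calc Z M p = (ENNReal.ofReal (Z M p)).toReal :=
            (ENNReal.toReal_ofReal (hZ_nonneg M p)).symm
        _ ≤ (G p).toReal := ENNReal.toReal_mono hp.ne h1
    have hBdd : BddAbove (Set.range fun M => Z M p) := by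
      refine ⟨(G p).toReal, ?_⟩
      rintro r ⟨M, rfl⟩
      exact hbdd M
    have htend0 : Tendsto (fun M => Z M p) atTop (𝓝 (⨆ M, Z M p)) :=
      tendsto_atTop_ciSup (hZ_mono p) hBdd
    have hsup : g p = ⨆ M, Z M p := by
      have h2 : G p = ENNReal.ofReal (⨆ M, Z M p) := by
        apply le_antisymm
        · apply iSup_le
          intro M
          exact ENNReal.ofReal_le_ofReal (le_ciSup hBdd M)
        · have h3 : Tendsto (fun M => ENNReal.ofReal (Z M p)) atTop
              (𝓝 (ENNReal.ofReal (⨆ M, Z M p))) :=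
            (ENNReal.continuous_ofReal.tendsto _).comp htend0
          apply le_of_tendsto h3
          exact Filter.Eventually.of_forall fun M =>
            le_iSup (fun M => ENNReal.ofReal (Z M p)) M
      rw [hg]
      simp only []
      rw [h2, ENNReal.toReal_ofReal (le_trans (hZ_nonneg 0 p) (le_ciSup hBdd 0))]
    exact ⟨hsup ▸ htend0, fun M => hsup ▸ le_ciSup hBdd M⟩
  -- the final convergence statement
  have hfinal : ∀ φ : ℝ × X → ℝ, Continuous φ → HasCompactSupport φ →
      Tendsto (fun k => ∫ p, φ p * gn (σ k) p ∂νT) atTop (𝓝 (∫ p, φ p * g p ∂νT)) := by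
    intro φ hφ hφc
    obtain ⟨Bφ', hBφ'⟩ := hφc.exists_bound_of_continuous hφ
    set Bφ : ℝ := |Bφ'| with hBφdef
    have hBφ0 : 0 ≤ Bφ := abs_nonneg _
    have hBφ : ∀ p, |φ p| ≤ Bφ := fun p =>
      le_trans (le_of_eq (Real.norm_eq_abs _).symm) ((hBφ' p).trans (le_abs_self _))
    set Kφ : Set (ℝ × X) := tsupport φ with hKφdef
    have hKφc : IsCompact Kφ := hφc
    have hKφm : MeasurableSet Kφ := (isClosed_tsupport φ).measurableSet
    have hφ0 : ∀ p, p ∉ Kφ → φ p = 0 := fun p hp => image_eq_zero_of_notMem_tsupport hp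
    have hKφfin : νT Kφ < ∞ := hKφc.measure_lt_top
    -- lintegral mass bound for gn
    have hmassL : ∀ n (Cs : Set (ℝ × X)),
        ∫⁻ p in Cs, ENNReal.ofReal (gn n p) ∂νT
          ≤ (N : ℝ≥0∞) + ENNReal.ofReal (Real.exp 2) * νT Cs := by
      intro n Cs
      calc ∫⁻ p in Cs, ENNReal.ofReal (gn n p) ∂νT
          ≤ ∫⁻ p in Cs, (ENNReal.ofReal (l (gn n p)) + ENNReal.ofReal (Real.exp 2)) ∂νT := by
            apply lintegral_mono
            intro p
            exact le_trans (ENNReal.ofReal_le_ofReal (l_mass (hgn_nonneg n p)))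
              (le_of_eq (ENNReal.ofReal_add (l_nonneg (hgn_nonneg n p)) (Real.exp_pos 2).le))
        _ = ∫⁻ p in Cs, ENNReal.ofReal (l (gn n p)) ∂νT
            + ENNReal.ofReal (Real.exp 2) * νT Cs := by
            rw [lintegral_add_right _ measurable_const, setLIntegral_const]
        _ ≤ (N : ℝ≥0∞) + ENNReal.ofReal (Real.exp 2) * νT Cs := by
            apply add_le_add_left
            exact le_trans (setLIntegral_le_lintegral _ _) (hl_lint n)
    have hgnK_int : ∀ n, IntegrableOn (gn n) Kφ νT := by
      intro n
      refine ⟨(hgn_meas n).aestronglyMeasurable.restrict, ?_⟩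
      rw [HasFiniteIntegral]
      calc ∫⁻ p, (‖gn n p‖₊ : ℝ≥0∞) ∂(νT.restrict Kφ)
          = ∫⁻ p in Kφ, ENNReal.ofReal (gn n p) ∂νT := by
            apply lintegral_congr
            exact fun p => Real.enorm_eq_ofReal (hgn_nonneg n p)
        _ ≤ (N : ℝ≥0∞) + ENNReal.ofReal (Real.exp 2) * νT Kφ := hmassL n Kφ
        _ < ∞ := by
            apply ENNReal.add_lt_top.mpr
            exact ⟨ENNReal.natCast_lt_top N, ENNReal.mul_lt_top ENNReal.ofReal_lt_top hKφfin⟩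
    have hgK_int : IntegrableOn g Kφ νT := by
      obtain ⟨m, hm⟩ := K.exists_superset_of_isCompact hKφc
      apply IntegrableOn.mono_set _ hm
      refine ⟨hg_meas.aestronglyMeasurable.restrict, ?_⟩
      rw [HasFiniteIntegral]
      calc ∫⁻ p, (‖g p‖₊ : ℝ≥0∞) ∂(νT.restrict (K m))
          = ∫⁻ p in K m, ENNReal.ofReal (g p) ∂νT := by
            apply lintegral_congr
            exact fun p => Real.enorm_eq_ofReal (hg_nonneg p)
        _ = ∫⁻ p in K m, G p ∂νT := by
            apply lintegral_congr_ae
            apply ae_restrict_of_ae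
            filter_upwards [hGfin] with p hp
            rw [hg]
            exact ENNReal.ofReal_toReal hp.ne
        _ ≤ ENNReal.ofReal ((N : ℝ) + Real.exp 2 * (νT (K m)).toReal) := hGK m
        _ < ∞ := ENNReal.ofReal_lt_top
    have hφf_int : ∀ (f : ℝ × X → ℝ), Measurable f → (∀ p, 0 ≤ f p) →
        IntegrableOn f Kφ νT → Integrable (fun p => φ p * f p) νT := by
      intro f hf hf0 hfint
      apply Integrable.mono' ((hfint.integrable_indicator hKφm).const_mul Bφ)
        ((hφ.measurable.mul hf).aestronglyMeasurable)
      apply Filter.Eventually.of_forall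
      intro p
      rw [Real.norm_eq_abs, Pi.mul_apply, abs_mul]
      by_cases hp : p ∈ Kφ
      · rw [Set.indicator_of_mem hp]
        exact mul_le_mul (hBφ p) (le_of_eq (abs_of_nonneg (hf0 p))) (abs_nonneg _) hBφ0
      · rw [Set.indicator_of_notMem hp, hφ0 p hp]
        simp
    have hφg_int : Integrable (fun p => φ p * g p) νT := hφf_int g hg_meas hg_nonneg hgK_int
    have hφgn_int : ∀ n, Integrable (fun p => φ p * gn n p) νT := fun n =>
      hφf_int (gn n) (hgn_meas n) (hgn_nonneg n) (hgnK_int n)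
    have hφu_int : ∀ n M, Integrable (fun p => φ p * u n M p) νT := by
      intro n M
      apply hφf_int (u n M) (hu_meas n M) (hu_nonneg n M)
      apply hbdd_intOn _ (M : ℝ) (hu_meas n M) _ _ hKφfin
      intro p
      rw [abs_of_nonneg (hu_nonneg n M p)]
      exact hu_le n M p
    have hφZ_int : ∀ M : ℕ, Integrable (fun p => φ p * Z M p) νT := by
      intro M
      apply hφf_int (Z M) (hZ_meas M) (hZ_nonneg M)
      apply hbdd_intOn _ (M : ℝ) (hZ_meas M) _ _ hKφfin
      intro p
      rw [abs_of_nonneg (hZ_nonneg M p)]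
      exact hZ_le M p
    -- (i) uniform truncation error
    have hstep1 : ∀ (M : ℕ), Real.exp 2 ≤ (M:ℝ) → ∀ n,
        |∫ p, φ p * gn n p ∂νT - ∫ p, φ p * u n M p ∂νT|
          ≤ Bφ * (N : ℝ) / (Real.log M - 1) := by
      intro M hM n
      have hlogpos : 0 < Real.log M - 1 := by
        have : (2:ℝ) ≤ Real.log M := by
          rw [← Real.log_exp 2]
          exact Real.log_le_log (Real.exp_pos 2) hM
        linarith
      have hsub : ∫ p, φ p * gn n p ∂νT - ∫ p, φ p * u n M p ∂νT
          = ∫ p, φ p * (gn n p - u n M p) ∂νT := by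
        rw [← integral_sub (hφgn_int n) (hφu_int n M)]
        congr 1
        funext p
        ring
      rw [hsub]
      have hDint : Integrable (fun p => Bφ / (Real.log M - 1) * l (gn n p)) νT :=
        (hl_int n).const_mul _
      calc |∫ p, φ p * (gn n p - u n M p) ∂νT|
          ≤ ∫ p, Bφ / (Real.log M - 1) * l (gn n p) ∂νT := by
            rw [← Real.norm_eq_abs]
            apply norm_integral_le_of_norm_le hDint
            apply Filter.Eventually.of_forall
            intro p
            rw [Real.norm_eq_abs, abs_mul]
            have h1 : gn n p - u n M p ≤ l (gn n p) / (Real.log M - 1) :=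
              l_tail hM (hgn_nonneg n p)
            have h2 : 0 ≤ gn n p - u n M p := by
              have := min_le_left (gn n p) (M:ℝ)
              simp only [hu]
              linarith [this]
            rw [abs_of_nonneg h2]
            calc |φ p| * (gn n p - u n M p) ≤ Bφ * (l (gn n p) / (Real.log M - 1)) := by
                  apply mul_le_mul (hBφ p) h1 h2 hBφ0
              _ = Bφ / (Real.log M - 1) * l (gn n p) := by ring
        _ = Bφ / (Real.log M - 1) * ∫ p, l (gn n p) ∂νT := integral_const_mul _ _
        _ ≤ Bφ / (Real.log M - 1) * (N : ℝ) := by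
            apply mul_le_mul_of_nonneg_left (hl_int_le n) (by positivity)
        _ = Bφ * (N : ℝ) / (Real.log M - 1) := by ring
    -- (ii) convergence at fixed truncation level
    have hstep2 : ∀ M : ℕ, Tendsto (fun k => ∫ p, φ p * u (σ k) M p ∂νT) atTop
        (𝓝 (∫ p, φ p * Z M p ∂νT)) := by
      intro M
      have h := hconv_test M φ hφ.measurable ⟨Kφ, Bφ, hKφc, hφ0, hBφ⟩
      have heq1 : ∀ k, ∫ p, u (σ k) M p * φ p ∂νT = ∫ p, φ p * u (σ k) M p ∂νT := by
        intro k; congr 1; funext p; ring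
      have heq2 : ∫ p, Y M p * φ p ∂νT = ∫ p, φ p * Z M p ∂νT := by
        apply integral_congr_ae
        filter_upwards [hZ_aeY M] with p hp
        rw [← hp]; ring
      rw [← heq2]
      exact h.congr heq1
    -- (iii) convergence of truncation levels
    have hstep3 : Tendsto (fun M => ∫ p, φ p * Z M p ∂νT) atTop
        (𝓝 (∫ p, φ p * g p ∂νT)) := by
      apply tendsto_integral_of_dominated_convergence
        (bound := fun p => Bφ * (Kφ.indicator g p))
      · exact fun M => (hφ.measurable.mul (hZ_meas M)).aestronglyMeasurable
      · exact (hgK_int.integrable_indicator hKφm).const_mul Bφ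
      · intro M
        filter_upwards [hg_lim] with p hp
        rw [Real.norm_eq_abs, abs_mul]
        by_cases hpK : p ∈ Kφ
        · rw [Set.indicator_of_mem hpK]
          apply mul_le_mul (hBφ p) _ (abs_nonneg _) hBφ0
          rw [abs_of_nonneg (hZ_nonneg M p)]
          exact hp.2 M
        · rw [Set.indicator_of_notMem hpK, hφ0 p hpK]
          simp
      · filter_upwards [hg_lim] with p hp
        exact (hp.1.const_mul (φ p))
    -- combine the three steps
    rw [Metric.tendsto_atTop]
    intro ε hε
    have hev1 : ∀ᶠ M : ℕ in atTop, Real.exp 2 ≤ (M:ℝ) :=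
      tendsto_natCast_atTop_atTop.eventually_ge_atTop (Real.exp 2)
    have hev2 : ∀ᶠ M : ℕ in atTop, Bφ * (N : ℝ) / (Real.log M - 1) < ε / 3 := by
      have h1 : Tendsto (fun M : ℕ => Real.log M - 1) atTop atTop := by
        have h2 : Tendsto (fun M : ℕ => Real.log M) atTop atTop :=
          Real.tendsto_log_atTop.comp tendsto_natCast_atTop_atTop
        exact tendsto_atTop_add_const_right _ (-1) h2
      have h3 : Tendsto (fun M : ℕ => Bφ * (N : ℝ) / (Real.log M - 1)) atTop (𝓝 0) :=
        Tendsto.div_atTop tendsto_const_nhds h1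
      exact h3.eventually_lt_const (by positivity)
    have hev3 : ∀ᶠ M : ℕ in atTop, |∫ p, φ p * Z M p ∂νT - ∫ p, φ p * g p ∂νT| < ε / 3 := by
      have := (Metric.tendsto_atTop.mp hstep3) (ε/3) (by positivity)
      obtain ⟨M₀, hM₀⟩ := this
      filter_upwards [eventually_ge_atTop M₀] with M hM
      have := hM₀ M hM
      rwa [Real.dist_eq] at this
    obtain ⟨M, ⟨hM1, hM2⟩, hM3⟩ := ((hev1.and hev2).and hev3).exists
    have hev4 := (Metric.tendsto_atTop.mp (hstep2 M)) (ε/3) (by positivity)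
    obtain ⟨k₀, hk₀⟩ := hev4
    refine ⟨k₀, fun k hk => ?_⟩
    have h4 := hk₀ k hk
    rw [Real.dist_eq] at h4 ⊢
    have h5 := hstep1 M hM1 (σ k)
    calc |∫ p, φ p * gn (σ k) p ∂νT - ∫ p, φ p * g p ∂νT|
        ≤ |∫ p, φ p * gn (σ k) p ∂νT - ∫ p, φ p * u (σ k) M p ∂νT|
          + |∫ p, φ p * u (σ k) M p ∂νT - ∫ p, φ p * Z M p ∂νT|
          + |∫ p, φ p * Z M p ∂νT - ∫ p, φ p * g p ∂νT| := by
          have t1 := abs_sub_le (∫ p, φ p * gn (σ k) p ∂νT) (∫ p, φ p * u (σ k) M p ∂νT)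
            (∫ p, φ p * g p ∂νT)
          have t2 := abs_sub_le (∫ p, φ p * u (σ k) M p ∂νT) (∫ p, φ p * Z M p ∂νT)
            (∫ p, φ p * g p ∂νT)
          linarith
      _ < ε := by linarith

  -- the cost bound
  have hcost : costLT νT g ≤ (N : ℝ≥0∞) := by
    have hlM_bd : ∀ (M : ℕ) (r : ℝ), 0 ≤ r → r ≤ M → l r ≤ 1 + l M := by
      intro M r h0 hM
      have hlM0 : 0 ≤ l (M:ℝ) := l_nonneg (M.cast_nonneg)
      rcases le_or_gt r 1 with h | h
      · linarith [l_le_one h0 h]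
      · have h2 : l r ≤ l M := l_monoOn (Set.mem_Ici.mpr h.le)
          (Set.mem_Ici.mpr (le_trans h.le hM)) hM
        linarith
    have hlZ_meas : ∀ M : ℕ, Measurable (fun p => l (Z M p)) :=
      fun M => l_continuous.measurable.comp (hZ_meas M)
    have hlZ_intOn : ∀ (M m : ℕ), IntegrableOn (fun p => l (Z M p)) (K m) νT := by
      intro M m
      apply hbdd_intOn _ (1 + l M) (hlZ_meas M) _ _ (K.isCompact m).measure_lt_top
      intro p
      rw [abs_of_nonneg (l_nonneg (hZ_nonneg M p))]
      exact hlM_bd M _ (hZ_nonneg M p) (hZ_le M p)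
    -- entropy bound for the truncated limits, on each compact
    have hZcostK : ∀ M : ℕ, 1 ≤ M → ∀ m : ℕ, ∫ p in K m, l (Z M p) ∂νT ≤ (N:ℝ) := by
      intro M hM m
      have hCm : MeasurableSet (K m) := hKmeas m
      have hCmfin : νT (K m) < ∞ := (K.isCompact m).measure_lt_top
      have hM1R : (1:ℝ) ≤ M := by exact_mod_cast hM
      have hkey : ∀ j : ℕ, ∫ p in K m, l (Z M p) ∂νT
          ≤ (N:ℝ) + (1/(j+2)) * (1 - Real.log (1/(j+2))) * (νT (K m)).toReal := by
        intro j
        set d : ℝ := 1/(j+2) with hd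
        have hd0 : 0 < d := by positivity
        have hd1 : d < 1 := by
          rw [hd, div_lt_one (by positivity)]
          have : (0:ℝ) ≤ (j:ℝ) := j.cast_nonneg
          linarith
        have hd_log_neg : Real.log d < 0 := Real.log_neg hd0 hd1
        set q : ℝ × X → ℝ := fun p => Real.log (max (Z M p) d) with hq
        have hq_meas : Measurable q :=
          Real.measurable_log.comp ((hZ_meas M).max measurable_const)
        have hmaxpos : ∀ p, 0 < max (Z M p) d := fun p => lt_of_lt_of_le hd0 (le_max_right _ _)
        have hq_lb : ∀ p, Real.log d ≤ q p := fun p => Real.log_le_log hd0 (le_max_right _ _)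
        have hq_ub : ∀ p, q p ≤ Real.log (M + 1) := by
          intro p
          apply Real.log_le_log (hmaxpos p)
          apply max_le
          · linarith [hZ_le M p]
          · linarith
        have hlogM1 : 0 ≤ Real.log ((M:ℝ) + 1) := Real.log_nonneg (by linarith)
        have hq_bd : ∀ p, |q p| ≤ |Real.log d| + Real.log ((M:ℝ)+1) := by
          intro p
          rw [abs_le]
          constructor
          · have h1 := hq_lb p
            have h2 := neg_abs_le (Real.log d)
            linarith
          · linarith [hq_ub p, abs_nonneg (Real.log d)]
        have hexpq : ∀ p, Real.exp (q p) = max (Z M p) d := by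
          intro p
          rw [hq]
          exact Real.exp_log (hmaxpos p)
        have hexp_intOn : IntegrableOn (fun p => Real.exp (q p) - 1) (K m) νT := by
          apply hbdd_intOn _ ((M:ℝ)+1) ((Real.measurable_exp.comp hq_meas).sub measurable_const)
            _ _ hCmfin
          intro p
          show |Real.exp (q p) - 1| ≤ (M:ℝ) + 1
          rw [hexpq p, abs_le]
          constructor
          · have := (hmaxpos p).le; linarith
          · have : max (Z M p) d ≤ (M:ℝ) + 1 := max_le (by linarith [hZ_le M p]) (by linarith)
            linarith
        have hfq_intOn : ∀ (f : ℝ × X → ℝ) (B : ℝ), Measurable f → (∀ p, |f p| ≤ B) →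
            IntegrableOn (fun p => f p * q p) (K m) νT := by
          intro f B hf hB
          apply hbdd_intOn _ (B * (|Real.log d| + Real.log ((M:ℝ)+1))) (hf.mul hq_meas) _ _ hCmfin
          intro p
          rw [Pi.mul_apply, abs_mul]
          apply mul_le_mul (hB p) (hq_bd p) (abs_nonneg _)
          exact le_trans (abs_nonneg _) (hB p)
        have hu_abs : ∀ n p, |u n M p| ≤ (M:ℝ) := by
          intro n p
          rw [abs_of_nonneg (hu_nonneg n M p)]
          exact hu_le n M p
        have hZ_abs : ∀ p, |Z M p| ≤ (M:ℝ) := by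
          intro p
          rw [abs_of_nonneg (hZ_nonneg M p)]
          exact hZ_le M p
        have huq_intOn : ∀ n, IntegrableOn (fun p => u n M p * q p) (K m) νT :=
          fun n => hfq_intOn _ (M:ℝ) (hu_meas n M) (hu_abs n)
        have hZq_intOn : IntegrableOn (fun p => Z M p * q p) (K m) νT :=
          hfq_intOn _ (M:ℝ) (hZ_meas M) hZ_abs
        have hlu_intOn : ∀ n, IntegrableOn (fun p => l (u n M p)) (K m) νT := by
          intro n
          apply hbdd_intOn _ (1 + l M) (l_continuous.measurable.comp (hu_meas n M)) _ _ hCmfin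
          intro p
          show |l (u n M p)| ≤ 1 + l M
          rw [abs_of_nonneg (l_nonneg (hu_nonneg n M p))]
          exact hlM_bd M _ (hu_nonneg n M p) (hu_le n M p)
        -- the Young-inequality bound, uniformly in n
        have c1 : ∀ n, ∫ p in K m, (u n M p * q p - (Real.exp (q p) - 1)) ∂νT ≤ (N:ℝ) := by
          intro n
          calc ∫ p in K m, (u n M p * q p - (Real.exp (q p) - 1)) ∂νT
              ≤ ∫ p in K m, l (u n M p) ∂νT := by
                apply setIntegral_mono_on ((huq_intOn n).sub hexp_intOn) (hlu_intOn n) hCm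
                intro p _
                exact l_young (hu_nonneg n M p) (q p)
            _ ≤ ∫ p in K m, l (gn n p) ∂νT := by
                apply setIntegral_mono_on (hlu_intOn n) (hl_int n).integrableOn hCm
                intro p _
                exact l_min_le hM1R (hgn_nonneg n p)
            _ ≤ ∫ p, l (gn n p) ∂νT := setIntegral_le_integral (hl_int n)
                (Filter.Eventually.of_forall fun p => l_nonneg (hgn_nonneg n p))
            _ ≤ (N:ℝ) := hl_int_le n
        -- pass to the limit along the subsequence
        have hid : ∀ f : ℝ × X → ℝ,
            ∫ p, f p * ((K m).indicator q p) ∂νT = ∫ p in K m, f p * q p ∂νT := by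
          intro f
          rw [← integral_indicator hCm]
          congr 1
          funext p
          by_cases hp : p ∈ K m <;> simp [hp]
        have hs := hconv_test M ((K m).indicator q) (hq_meas.indicator hCm)
          ⟨K m, |Real.log d| + Real.log ((M:ℝ)+1), K.isCompact m,
            (fun p hp => Set.indicator_of_notMem hp _),
            fun p => by
              by_cases hp : p ∈ K m
              · rw [Set.indicator_of_mem hp]; exact hq_bd p
              · rw [Set.indicator_of_notMem hp]; rw [abs_zero]; positivity⟩
        have c2 : Tendsto (fun k => ∫ p in K m, u (σ k) M p * q p ∂νT) atTop
            (𝓝 (∫ p in K m, Z M p * q p ∂νT)) := by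
          have heqY : ∫ p, Y M p * ((K m).indicator q p) ∂νT = ∫ p in K m, Z M p * q p ∂νT := by
            rw [hid]
            apply integral_congr_ae
            apply ae_restrict_of_ae
            filter_upwards [hZ_aeY M] with p hp
            rw [hp]
          rw [← heqY]
          exact hs.congr (fun k => hid (u (σ k) M))
        have c3 : ∫ p in K m, (Z M p * q p - (Real.exp (q p) - 1)) ∂νT ≤ (N:ℝ) := by
          have e2 : ∫ p in K m, (Z M p * q p - (Real.exp (q p) - 1)) ∂νT
              = ∫ p in K m, Z M p * q p ∂νT - ∫ p in K m, (Real.exp (q p) - 1) ∂νT :=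
            integral_sub hZq_intOn hexp_intOn
          have hT : Tendsto (fun k => ∫ p in K m, (u (σ k) M p * q p - (Real.exp (q p) - 1)) ∂νT)
              atTop (𝓝 (∫ p in K m, (Z M p * q p - (Real.exp (q p) - 1)) ∂νT)) := by
            rw [e2]
            have e1 : ∀ k, ∫ p in K m, (u (σ k) M p * q p - (Real.exp (q p) - 1)) ∂νT
                = ∫ p in K m, u (σ k) M p * q p ∂νT
                  - ∫ p in K m, (Real.exp (q p) - 1) ∂νT :=
              fun k => integral_sub (huq_intOn (σ k)) hexp_intOn
            exact (c2.sub tendsto_const_nhds).congr (fun k => (e1 k).symm)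
          exact le_of_tendsto hT (Filter.Eventually.of_forall (fun k => c1 (σ k)))
        -- pointwise lower bound
        have c4 : ∀ p, l (Z M p) - d * (1 - Real.log d)
            ≤ Z M p * q p - (Real.exp (q p) - 1) := by
          intro p
          have hdpos2 : 0 ≤ d * (1 - Real.log d) := by nlinarith
          rcases le_or_gt d (Z M p) with h | h
          · have hmax : max (Z M p) d = Z M p := max_eq_left h
            have hqp : q p = Real.log (Z M p) := by rw [hq]; simp only []; rw [hmax]
            rw [hexpq p, hmax, hqp]
            have hlz : l (Z M p) = Z M p * Real.log (Z M p) - Z M p + 1 := rfl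
            linarith
          · have hmax : max (Z M p) d = d := max_eq_right h.le
            have hqp : q p = Real.log d := by rw [hq]; simp only []; rw [hmax]
            rw [hexpq p, hmax, hqp]
            have h1 : d * Real.log d ≤ Z M p * Real.log d :=
              mul_le_mul_of_nonpos_right h.le hd_log_neg.le
            have h2 : l (Z M p) ≤ 1 := l_le_one (hZ_nonneg M p) (le_trans h.le hd1.le)
            have hexpand : d * (1 - Real.log d) = d - d * Real.log d := by ring
            linarith
        -- conclude
        have c5 : ∫ p in K m, (l (Z M p) - d * (1 - Real.log d)) ∂νT
            ≤ ∫ p in K m, (Z M p * q p - (Real.exp (q p) - 1)) ∂νT := by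
          apply setIntegral_mono_on ((hlZ_intOn M m).sub (integrableOn_const (hCmfin).ne))
            (hZq_intOn.sub hexp_intOn) hCm
          intro p _
          exact c4 p
        rw [integral_sub (hlZ_intOn M m) (integrableOn_const (hCmfin).ne)] at c5
        rw [setIntegral_const] at c5
        rw [smul_eq_mul] at c5
        have := le_trans c5 c3
        rw [hd]
        rw [measureReal_def] at this; linarith
      -- let δ → 0
      have hδ_tend : Tendsto (fun j : ℕ =>
          (N:ℝ) + (1/(j+2)) * (1 - Real.log (1/(j+2))) * (νT (K m)).toReal) atTop
          (𝓝 ((N:ℝ) + 0 * (νT (K m)).toReal)) := by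
        apply Tendsto.add tendsto_const_nhds
        apply Tendsto.mul_const
        have h1 : Tendsto (fun j : ℕ => (1/(j+2):ℝ)) atTop (𝓝 0) := by
          simp only [one_div]
          apply Filter.Tendsto.inv_tendsto_atTop
          exact tendsto_atTop_add_const_right _ 2 tendsto_natCast_atTop_atTop
        have h2 : Tendsto (fun x : ℝ => x * (1 - Real.log x)) (𝓝 0) (𝓝 0) := by
          have h3 : Continuous (fun x : ℝ => x - x * Real.log x) :=
            continuous_id.sub Real.continuous_mul_log
          have h4 := h3.tendsto 0
          simp only [Real.log_zero, mul_zero, sub_zero, zero_mul, sub_self] at h4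
          apply h4.congr
          intro x
          ring
        exact h2.comp h1
      rw [zero_mul, add_zero] at hδ_tend
      exact ge_of_tendsto hδ_tend (Filter.Eventually.of_forall hkey)
    -- globalize over the exhaustion
    have hZcost : ∀ M : ℕ, 1 ≤ M → ∫⁻ p, ENNReal.ofReal (l (Z M p)) ∂νT ≤ (N:ℝ≥0∞) := by
      intro M hM
      have hmono : Monotone (fun m => (K m).indicator (fun p => ENNReal.ofReal (l (Z M p)))) := by
        intro m m' h
        apply Set.indicator_le_indicator_of_subset (K.subset h)
        intro p
        exact zero_le
      calc ∫⁻ p, ENNReal.ofReal (l (Z M p)) ∂νT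
          = ∫⁻ p, ⨆ m, (K m).indicator (fun p => ENNReal.ofReal (l (Z M p))) p ∂νT := by
            apply lintegral_congr
            intro p
            apply le_antisymm
            · obtain ⟨m, hm⟩ := K.exists_mem p
              refine le_trans ?_ (le_iSup _ m)
              rw [Set.indicator_of_mem hm]
            · apply iSup_le
              intro m
              exact Set.indicator_le_self _ _ p
        _ = ⨆ m, ∫⁻ p, (K m).indicator (fun p => ENNReal.ofReal (l (Z M p))) p ∂νT :=
            lintegral_iSup (fun m => ((hlZ_meas M).ennreal_ofReal).indicator (hKmeas m)) hmono
        _ ≤ (N:ℝ≥0∞) := by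
            apply iSup_le
            intro m
            rw [lintegral_indicator (hKmeas m)]
            rw [← ofReal_integral_eq_lintegral_ofReal (hlZ_intOn M m)
              (Filter.Eventually.of_forall fun p => l_nonneg (hZ_nonneg M p))]
            calc ENNReal.ofReal (∫ p in K m, l (Z M p) ∂νT)
                ≤ ENNReal.ofReal (N:ℝ) := ENNReal.ofReal_le_ofReal (hZcostK M hM m)
              _ = (N:ℝ≥0∞) := by simp
    -- Fatou in the truncation level
    rw [costLT_eq]
    have hae : ∀ᵐ p ∂νT, ENNReal.ofReal (l (g p))
        = Filter.liminf (fun M : ℕ => ENNReal.ofReal (l (Z M p))) atTop := by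
      filter_upwards [hg_lim] with p hp
      have h1 : Tendsto (fun M : ℕ => ENNReal.ofReal (l (Z M p))) atTop
          (𝓝 (ENNReal.ofReal (l (g p)))) :=
        (ENNReal.continuous_ofReal.tendsto _).comp ((l_continuous.tendsto _).comp hp.1)
      exact h1.liminf_eq.symm
    calc ∫⁻ p, ENNReal.ofReal (l (g p)) ∂νT
        = ∫⁻ p, Filter.liminf (fun M : ℕ => ENNReal.ofReal (l (Z M p))) atTop ∂νT :=
          lintegral_congr_ae hae
      _ ≤ Filter.liminf (fun M : ℕ => ∫⁻ p, ENNReal.ofReal (l (Z M p)) ∂νT) atTop :=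
          lintegral_liminf_le (fun M => (hlZ_meas M).ennreal_ofReal)
      _ ≤ (N:ℝ≥0∞) := by
          have hev : ∀ᶠ M : ℕ in atTop,
              (∫⁻ p, ENNReal.ofReal (l (Z M p)) ∂νT) ≤ (N:ℝ≥0∞) := by
            filter_upwards [eventually_ge_atTop 1] with M hM
            exact hZcost M hM
          calc Filter.liminf (fun M : ℕ => ∫⁻ p, ENNReal.ofReal (l (Z M p)) ∂νT) atTop
              ≤ Filter.liminf (fun _ : ℕ => (N:ℝ≥0∞)) atTop := Filter.liminf_le_liminf hev
            _ = (N:ℝ≥0∞) := Filter.liminf_const _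
  exact ⟨σ, hσ, g, ⟨hg_meas, hg_nonneg, hcost⟩, hfinal⟩
end

section
/- (Weak convergence of the drift convolution) Assume ‖S(t)‖ ≤ 1 for all t ≥ 0. Let f : H → H be demicontinuous (if x_n → x strongly in H then f(x_n) → f(x) weakly in H) and satisfy ‖f(x)‖ ≤ C(1 + ‖x‖) for some C > 0 and all x ∈ H. Let X_n, X : [0,T] → H be continuous functions with sup_{0 ≤ t ≤ T} ‖X_n(t) − X(t)‖ → 0 as n → ∞. Then for every t ∈ [0,T] and every h ∈ H, ⟨∫₀ᵗ S(t−s) f(X_n(s)) ds, h⟩ → ⟨∫₀ᵗ S(t−s) f(X(s)) ds, h⟩ as n → ∞; that is, ∫₀ᵗ S(t−s) f(X_n(s)) ds converges weakly in H to ∫₀ᵗ S(t−s) f(X(s)) ds. -/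
open MeasureTheory Filter RealInnerProductSpace

section Aux

variable {H : Type*} [NormedAddCommGroup H] [InnerProductSpace ℝ H]

lemma measurable_of_weakly_continuous [SecondCountableTopology H] [MeasurableSpace H]
    [BorelSpace H] {g : ℝ → H} (hg : ∀ h : H, Continuous fun s => ⟪g s, h⟫) :
    Measurable g := by
  have hclosed : ∀ (c : H) (r : ℝ), IsClosed {s : ℝ | ‖g s - c‖ ≤ r} := by
    intro c r
    rcases lt_or_ge r 0 with hr | hr
    · have : {s : ℝ | ‖g s - c‖ ≤ r} = ∅ := by
        ext s
        simp only [Set.mem_setOf_eq, Set.mem_empty_iff_false, iff_false, not_le]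
        exact lt_of_lt_of_le hr (norm_nonneg _)
      rw [this]; exact isClosed_empty
    · have hset : {s : ℝ | ‖g s - c‖ ≤ r} = ⋂ h : H, {s : ℝ | ⟪g s - c, h⟫ ≤ r * ‖h‖} := by
        ext s
        simp only [Set.mem_setOf_eq, Set.mem_iInter]
        constructor
        · intro hs h
          calc ⟪g s - c, h⟫ ≤ ‖g s - c‖ * ‖h‖ := real_inner_le_norm _ _
            _ ≤ r * ‖h‖ := mul_le_mul_of_nonneg_right hs (norm_nonneg _)
        · intro hs
          rcases eq_or_lt_of_le (norm_nonneg (g s - c)) with h0 | h0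
          · rw [← h0]; exact hr
          · have h1 := hs (g s - c)
            rw [real_inner_self_eq_norm_mul_norm] at h1
            exact le_of_mul_le_mul_right h1 h0
      rw [hset]
      refine isClosed_iInter fun h => ?_
      have hcont : Continuous fun s => ⟪g s - c, h⟫ := by
        simp only [inner_sub_left]; exact (hg h).sub continuous_const
      exact isClosed_le hcont continuous_const
  have hbasis : TopologicalSpace.IsTopologicalBasis {B : Set H | ∃ c r, B = Metric.ball c r} :=
    TopologicalSpace.isTopologicalBasis_of_isOpen_of_nhds
      (by rintro _ ⟨c, r, rfl⟩; exact Metric.isOpen_ball)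
      (fun x u hx hu => by
        obtain ⟨ε, hε, hsub⟩ := Metric.isOpen_iff.1 hu x hx
        exact ⟨Metric.ball x ε, ⟨x, ε, rfl⟩, Metric.mem_ball_self hε, hsub⟩)
  suffices hgen : @Measurable ℝ H _
      (MeasurableSpace.generateFrom {B : Set H | ∃ c r, B = Metric.ball c r}) g by
    rwa [← hbasis.borel_eq_generateFrom, ← BorelSpace.measurable_eq (α := H)] at hgen
  refine measurable_generateFrom ?_
  rintro _ ⟨c, r, rfl⟩
  have hpre : g ⁻¹' Metric.ball c r = ⋃ n : ℕ, {s : ℝ | ‖g s - c‖ ≤ r - 1 / (n + 1)} := by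
    ext s
    simp only [Set.mem_preimage, Metric.mem_ball, dist_eq_norm, Set.mem_iUnion, Set.mem_setOf_eq]
    constructor
    · intro hs
      obtain ⟨n, hn⟩ := exists_nat_one_div_lt (sub_pos.2 hs)
      exact ⟨n, by linarith⟩
    · rintro ⟨n, hn⟩
      have hpos : (0 : ℝ) < 1 / (n + 1) := by positivity
      linarith
  rw [hpre]
  exact MeasurableSet.iUnion fun n => (hclosed c _).measurableSet

lemma continuous_semigroup_pair (S : ℝ → H →L[ℝ] H)
    (hScont : ∀ x : H, ContinuousOn (fun t => S t x) (Set.Ici 0))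
    (hScontr : ∀ t : ℝ, 0 ≤ t → ‖S t‖ ≤ 1) :
    Continuous fun p : ℝ × H => S (max p.1 0) p.2 := by
  rw [continuous_iff_continuousAt]
  rintro ⟨r₀, y₀⟩
  have hφ : Continuous fun r : ℝ => S (max r 0) y₀ :=
    (hScont y₀).comp_continuous (continuous_id.max continuous_const) fun r => Set.mem_Ici.2 (le_max_right r 0)
  rw [ContinuousAt, tendsto_iff_norm_sub_tendsto_zero]
  have h1 : Tendsto (fun p : ℝ × H => ‖p.2 - y₀‖) (nhds (r₀, y₀)) (nhds 0) := by
    have ht : Tendsto (fun p : ℝ × H => p.2) (nhds (r₀, y₀)) (nhds y₀) :=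
      continuous_snd.continuousAt
    simpa using ((ht.sub_const y₀).norm)
  have h2 : Tendsto (fun p : ℝ × H => ‖S (max p.1 0) y₀ - S (max r₀ 0) y₀‖)
      (nhds (r₀, y₀)) (nhds 0) := by
    have ht : Tendsto (fun p : ℝ × H => S (max p.1 0) y₀) (nhds (r₀, y₀)) (nhds (S (max r₀ 0) y₀)) :=
      (hφ.tendsto r₀).comp (continuous_fst.tendsto (r₀, y₀))
    simpa using ((ht.sub_const (S (max r₀ 0) y₀)).norm)
  have hb : Tendsto (fun p : ℝ × H => ‖p.2 - y₀‖ + ‖S (max p.1 0) y₀ - S (max r₀ 0) y₀‖)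
      (nhds (r₀, y₀)) (nhds 0) := by simpa using h1.add h2
  refine squeeze_zero (fun p => norm_nonneg _) (fun p => ?_) hb
  calc ‖S (max p.1 0) p.2 - S (max r₀ 0) y₀‖
      ≤ ‖S (max p.1 0) p.2 - S (max p.1 0) y₀‖ + ‖S (max p.1 0) y₀ - S (max r₀ 0) y₀‖ :=
        norm_sub_le_norm_sub_add_norm_sub _ _ _
    _ ≤ ‖p.2 - y₀‖ + ‖S (max p.1 0) y₀ - S (max r₀ 0) y₀‖ := by
        gcongr
        calc ‖S (max p.1 0) p.2 - S (max p.1 0) y₀‖ = ‖S (max p.1 0) (p.2 - y₀)‖ := by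
              rw [map_sub]
          _ ≤ ‖S (max p.1 0)‖ * ‖p.2 - y₀‖ := (S (max p.1 0)).le_opNorm _
          _ ≤ 1 * ‖p.2 - y₀‖ :=
              mul_le_mul_of_nonneg_right (hScontr _ (le_max_right _ _)) (norm_nonneg _)
          _ = ‖p.2 - y₀‖ := one_mul _

lemma aux_integrableOn [SecondCountableTopology H]
    (S : ℝ → H →L[ℝ] H)
    (hScont : ∀ x : H, ContinuousOn (fun t => S t x) (Set.Ici 0))
    (hScontr : ∀ t : ℝ, 0 ≤ t → ‖S t‖ ≤ 1)
    (f : H → H) (C : ℝ)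
    (hfdemi : ∀ (x : ℕ → H) (x₀ : H), Tendsto x atTop (nhds x₀) →
      ∀ h : H, Tendsto (fun n => ⟪f (x n), h⟫) atTop (nhds ⟪f x₀, h⟫))
    (hfgrowth : ∀ x : H, ‖f x‖ ≤ C * (1 + ‖x‖))
    {T : ℝ} (hT : 0 ≤ T) (Y : ℝ → H) (hY : ContinuousOn Y (Set.Icc 0 T))
    {t : ℝ} (ht0 : 0 ≤ t) (htT : t ≤ T) :
    IntegrableOn (fun s => S (t - s) (f (Y s))) (Set.Ioc 0 t) := by
  borelize H
  set Y' : ℝ → H := Set.IccExtend hT ((Set.Icc 0 T).restrict Y) with hY'def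
  have hY'c : Continuous Y' :=
    Continuous.Icc_extend' (continuousOn_iff_continuous_restrict.1 hY)
  have hY'eq : ∀ s ∈ Set.Icc 0 T, Y' s = Y s := fun s hs => by
    rw [hY'def, Set.IccExtend_of_mem hT _ hs]; rfl
  have hwc : ∀ hv : H, Continuous fun s : ℝ => ⟪f (Y' s), hv⟫ := by
    intro hv
    rw [continuous_iff_seqContinuous]
    intro u s₀ hu
    exact hfdemi (fun n => Y' (u n)) (Y' s₀) ((hY'c.tendsto s₀).comp hu) hv
  have hgm : Measurable fun s => f (Y' s) := measurable_of_weakly_continuous hwc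
  have hGm : Measurable fun s : ℝ => S (max (t - s) 0) (f (Y' s)) :=
    (continuous_semigroup_pair S hScont hScontr).measurable.comp
      ((measurable_const.sub measurable_id).prodMk hgm)
  obtain ⟨M, hM⟩ := isCompact_Icc.exists_bound_of_continuousOn hY
  have hM0 : 0 ≤ M := le_trans (norm_nonneg _) (hM 0 ⟨le_refl 0, hT⟩)
  have hC0 : 0 ≤ C := by
    have := hfgrowth 0
    simp only [norm_zero] at this
    nlinarith [norm_nonneg (f (0 : H))]
  have hbY' : ∀ s : ℝ, ‖Y' s‖ ≤ M := fun s => hM _ (Set.projIcc 0 T hT s).2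
  haveI : IsFiniteMeasure (volume.restrict (Set.Ioc (0:ℝ) t)) := by
    constructor
    rw [Measure.restrict_apply_univ, Real.volume_Ioc]
    exact ENNReal.ofReal_lt_top
  have hint : IntegrableOn (fun s : ℝ => S (max (t - s) 0) (f (Y' s))) (Set.Ioc 0 t) := by
    refine Integrable.mono' (integrable_const (C * (1 + M)))
      hGm.aestronglyMeasurable.restrict (Filter.Eventually.of_forall fun s => ?_)
    calc ‖S (max (t - s) 0) (f (Y' s))‖
        ≤ ‖S (max (t - s) 0)‖ * ‖f (Y' s)‖ := (S _).le_opNorm _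
      _ ≤ 1 * (C * (1 + ‖Y' s‖)) :=
          mul_le_mul (hScontr _ (le_max_right _ _)) (hfgrowth _) (norm_nonneg _) zero_le_one
      _ = C * (1 + ‖Y' s‖) := one_mul _
      _ ≤ C * (1 + M) := by nlinarith [hbY' s]
  refine hint.congr_fun (fun s hs => ?_) measurableSet_Ioc
  have hts : (0 : ℝ) ≤ t - s := by linarith [hs.2]
  dsimp only
  rw [max_eq_left hts, hY'eq s ⟨hs.1.le, hs.2.trans htT⟩]

end Aux

/-- Weak convergence of the drift convolution: if `X_n → X` uniformly on `[0,T]`, then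
`∫₀ᵗ S(t−s) f(X_n(s)) ds` converges weakly in `H` to `∫₀ᵗ S(t−s) f(X(s)) ds`. -/
theorem drift_convolution_weak_tendsto
    {H : Type*} [NormedAddCommGroup H] [InnerProductSpace ℝ H] [CompleteSpace H]
    [SecondCountableTopology H]
    (S : ℝ → H →L[ℝ] H)
    (hS0 : S 0 = ContinuousLinearMap.id ℝ H)
    (hSadd : ∀ s t : ℝ, 0 ≤ s → 0 ≤ t → S (t + s) = (S t).comp (S s))
    (hScont : ∀ x : H, ContinuousOn (fun t => S t x) (Set.Ici 0))
    (hScontr : ∀ t : ℝ, 0 ≤ t → ‖S t‖ ≤ 1)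
    (T : ℝ) (hT : 0 < T)
    (f : H → H) (C : ℝ) (hC : 0 < C)
    (hfdemi : ∀ (x : ℕ → H) (x₀ : H), Tendsto x atTop (nhds x₀) →
      ∀ h : H, Tendsto (fun n => ⟪f (x n), h⟫) atTop (nhds ⟪f x₀, h⟫))
    (hfgrowth : ∀ x : H, ‖f x‖ ≤ C * (1 + ‖x‖))
    (Xn : ℕ → ℝ → H) (Xg : ℝ → H)
    (hXncont : ∀ n, ContinuousOn (Xn n) (Set.Icc 0 T))
    (hXgcont : ContinuousOn Xg (Set.Icc 0 T))
    (hunif : Tendsto (fun n => ⨆ t : Set.Icc (0 : ℝ) T, ‖Xn n t - Xg t‖) atTop (nhds 0)) :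
    ∀ t ∈ Set.Icc (0 : ℝ) T, ∀ h : H,
      Tendsto (fun n => ⟪∫ s in (0:ℝ)..t, S (t - s) (f (Xn n s)), h⟫) atTop
        (nhds ⟪∫ s in (0:ℝ)..t, S (t - s) (f (Xg s)), h⟫) := by
  intro t ht h
  obtain ⟨ht0, htT⟩ := ht
  have hC0 : (0 : ℝ) ≤ C := hC.le
  have Ig : IntegrableOn (fun s => S (t - s) (f (Xg s))) (Set.Ioc 0 t) :=
    aux_integrableOn S hScont hScontr f C hfdemi hfgrowth hT.le Xg hXgcont ht0 htT
  have In : ∀ n, IntegrableOn (fun s => S (t - s) (f (Xn n s))) (Set.Ioc 0 t) :=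
    fun n => aux_integrableOn S hScont hScontr f C hfdemi hfgrowth hT.le (Xn n)
      (hXncont n) ht0 htT
  simp only [intervalIntegral.integral_of_le ht0]
  have key : ∀ φ : ℝ → H, IntegrableOn φ (Set.Ioc 0 t) →
      ⟪∫ s in Set.Ioc 0 t, φ s, h⟫ = ∫ s in Set.Ioc 0 t, ⟪φ s, h⟫ := by
    intro φ hφ
    calc ⟪∫ s in Set.Ioc 0 t, φ s, h⟫ = ⟪h, ∫ s in Set.Ioc 0 t, φ s⟫ := real_inner_comm _ _
      _ = ∫ s in Set.Ioc 0 t, ⟪h, φ s⟫ := (integral_inner hφ h).symm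
      _ = ∫ s in Set.Ioc 0 t, ⟪φ s, h⟫ := by simp_rw [real_inner_comm]
  rw [key _ Ig]
  have hfun : (fun n => ⟪∫ s in Set.Ioc 0 t, S (t - s) (f (Xn n s)), h⟫)
      = fun n => ∫ s in Set.Ioc 0 t, ⟪S (t - s) (f (Xn n s)), h⟫ :=
    funext fun n => key _ (In n)
  rw [hfun]
  -- bounds
  obtain ⟨MG, hMG⟩ := isCompact_Icc.exists_bound_of_continuousOn hXgcont
  have hbdd : ∀ n, BddAbove (Set.range fun p : Set.Icc (0:ℝ) T => ‖Xn n p - Xg p‖) := by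
    intro n
    have hc : Continuous fun p : Set.Icc (0:ℝ) T => ‖Xn n ↑p - Xg ↑p‖ :=
      ((continuousOn_iff_continuous_restrict.1 (hXncont n)).sub
        (continuousOn_iff_continuous_restrict.1 hXgcont)).norm
    exact (isCompact_range hc).bddAbove
  have hle : ∀ n, ∀ s ∈ Set.Icc (0:ℝ) T,
      ‖Xn n s - Xg s‖ ≤ ⨆ p : Set.Icc (0:ℝ) T, ‖Xn n p - Xg p‖ :=
    fun n s hs => le_ciSup (hbdd n) ⟨s, hs⟩
  haveI : IsFiniteMeasure (volume.restrict (Set.Ioc (0:ℝ) t)) := by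
    constructor
    rw [Measure.restrict_apply_univ, Real.volume_Ioc]
    exact ENNReal.ofReal_lt_top
  refine tendsto_integral_filter_of_dominated_convergence
    (fun _ => ‖h‖ * (C * (2 + MG))) ?_ ?_ ?_ ?_
  · exact Filter.Eventually.of_forall fun n =>
      (In n).aestronglyMeasurable.inner aestronglyMeasurable_const
  · have hev : ∀ᶠ n in atTop, (⨆ p : Set.Icc (0:ℝ) T, ‖Xn n p - Xg p‖) < 1 :=
      hunif.eventually_lt_const one_pos
    refine hev.mono fun n hn => ?_
    rw [ae_restrict_iff' measurableSet_Ioc]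
    refine Filter.Eventually.of_forall fun s hs => ?_
    have hsIcc : s ∈ Set.Icc (0:ℝ) T := ⟨hs.1.le, hs.2.trans htT⟩
    have hXb : ‖Xn n s‖ ≤ MG + 1 := by
      have h1 := hle n s hsIcc
      have h2 := hMG s hsIcc
      have h3 : Xn n s = Xg s + (Xn n s - Xg s) := by abel
      calc ‖Xn n s‖ = ‖Xg s + (Xn n s - Xg s)‖ := by rw [← h3]
        _ ≤ ‖Xg s‖ + ‖Xn n s - Xg s‖ := norm_add_le _ _
        _ ≤ MG + 1 := by linarith
    calc ‖⟪S (t - s) (f (Xn n s)), h⟫‖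
        ≤ ‖S (t - s) (f (Xn n s))‖ * ‖h‖ := by
          rw [Real.norm_eq_abs]; exact abs_real_inner_le_norm _ _
      _ ≤ (C * (1 + ‖Xn n s‖)) * ‖h‖ := by
          refine mul_le_mul_of_nonneg_right ?_ (norm_nonneg h)
          calc ‖S (t - s) (f (Xn n s))‖ ≤ ‖S (t - s)‖ * ‖f (Xn n s)‖ := (S _).le_opNorm _
            _ ≤ 1 * (C * (1 + ‖Xn n s‖)) :=
                mul_le_mul (hScontr _ (by linarith [hs.2])) (hfgrowth _)
                  (norm_nonneg _) zero_le_one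
            _ = C * (1 + ‖Xn n s‖) := one_mul _
      _ ≤ ‖h‖ * (C * (2 + MG)) := by
          rw [mul_comm]
          exact mul_le_mul_of_nonneg_left
            (mul_le_mul_of_nonneg_left (by linarith) hC0) (norm_nonneg h)
  · exact integrable_const _
  · rw [ae_restrict_iff' measurableSet_Ioc]
    refine Filter.Eventually.of_forall fun s hs => ?_
    have hXns : Tendsto (fun n => Xn n s) atTop (nhds (Xg s)) := by
      rw [tendsto_iff_norm_sub_tendsto_zero]
      exact squeeze_zero (fun n => norm_nonneg _)
        (fun n => hle n s ⟨hs.1.le, hs.2.trans htT⟩) hunif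
    have hdemi := hfdemi (fun n => Xn n s) (Xg s) hXns
      (ContinuousLinearMap.adjoint (S (t - s)) h)
    simpa only [ContinuousLinearMap.adjoint_inner_right] using hdemi
end

section
/- (Stability estimate for the controlled diffusion convolution) Assume ‖S(t)‖ ≤ 1 for all t ≥ 0, and let G satisfy the coefficient hypotheses. Let Y, Z : [0,T] → H be continuous and let g₁, g₂ : X_T → [0,∞) be measurable functions for which the integrals below are finite. Then for every t ∈ [0,T]: ‖∫₀ᵗ S(t−s) ∫_X [G(s, Y_s, v)(g₁(s,v) − 1) − G(s, Z_s, v)(g₂(s,v) − 1)] ν(dv) ds‖ ≤ (sup_{0 ≤ s ≤ T} ‖Y_s − Z_s‖) ∫_{X_T} ‖G(s,v)‖₁ |g₁(s,v) − 1| ν(dv) ds + (1 + sup_{0 ≤ s ≤ T} ‖Z_s‖) ∫_{X_T} ‖G(s,v)‖₀ |g₁(s,v) − g₂(s,v)| ν(dv) ds. -/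
open MeasureTheory Filter RealInnerProductSpace
open scoped ENNReal

/-- Stability estimate for the controlled diffusion convolution. -/
theorem controlled_diffusion_convolution_stability
    {H : Type*} [NormedAddCommGroup H] [InnerProductSpace ℝ H] [CompleteSpace H]
    [SecondCountableTopology H] [MeasurableSpace H] [BorelSpace H]
    {X : Type*} [TopologicalSpace X] [PolishSpace X] [LocallyCompactSpace X]
    [MeasurableSpace X] [BorelSpace X]
    (ν : Measure X) [IsFiniteMeasureOnCompacts ν]
    (T : ℝ) (hT : 0 < T)
    (νT : Measure (ℝ × X)) (hνT : νT = (volume.restrict (Set.Icc 0 T)).prod ν)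
    -- the `C₀`-semigroup, a contraction
    (S : ℝ → H →L[ℝ] H)
    (hS0 : S 0 = ContinuousLinearMap.id ℝ H)
    (hSadd : ∀ s t : ℝ, 0 ≤ s → 0 ≤ t → S (t + s) = (S t).comp (S s))
    (hScont : ∀ x : H, ContinuousOn (fun t => S t x) (Set.Ici 0))
    (hScontr : ∀ t : ℝ, 0 ≤ t → ‖S t‖ ≤ 1)
    -- the diffusion coefficient `G` and the norms `‖G(t,v)‖₀`, `‖G(t,v)‖₁`
    (G : ℝ → H → X → H)
    (hGmeas : Measurable fun p : ℝ × H × X => G p.1 p.2.1 p.2.2)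
    (G0 G1 : ℝ × X → ℝ)
    (hG0meas : Measurable G0) (hG1meas : Measurable G1)
    (hG0nonneg : ∀ p, 0 ≤ G0 p) (hG1nonneg : ∀ p, 0 ≤ G1 p)
    (hG0dom : ∀ (t : ℝ) (x : H) (v : X), ‖G t x v‖ ≤ G0 (t, v) * (1 + ‖x‖))
    (hG1dom : ∀ (t : ℝ) (x y : H) (v : X), ‖G t x v - G t y v‖ ≤ G1 (t, v) * ‖x - y‖)
    -- the paths and the controls
    (Y Z : ℝ → H)
    (hYcont : ContinuousOn Y (Set.Icc 0 T)) (hZcont : ContinuousOn Z (Set.Icc 0 T))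
    (g₁ g₂ : ℝ × X → ℝ)
    (hg₁meas : Measurable g₁) (hg₂meas : Measurable g₂)
    (hg₁nonneg : ∀ p, 0 ≤ g₁ p) (hg₂nonneg : ∀ p, 0 ≤ g₂ p)
    -- finiteness of the integrals involved
    (hInt1 : Integrable (fun p : ℝ × X => G1 p * |g₁ p - 1|) νT)
    (hInt2 : Integrable (fun p : ℝ × X => G0 p * |g₁ p - g₂ p|) νT)
    (hIntY : ∀ s ∈ Set.Icc (0 : ℝ) T, Integrable (fun v => (g₁ (s, v) - 1) • G s (Y s) v) ν)
    (hIntZ : ∀ s ∈ Set.Icc (0 : ℝ) T, Integrable (fun v => (g₂ (s, v) - 1) • G s (Z s) v) ν)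
    (hOuter : ∀ t ∈ Set.Icc (0 : ℝ) T, IntervalIntegrable
      (fun s => S (t - s) ((∫ v, (g₁ (s, v) - 1) • G s (Y s) v ∂ν) -
        ∫ v, (g₂ (s, v) - 1) • G s (Z s) v ∂ν)) volume 0 t) :
    ∀ t ∈ Set.Icc (0 : ℝ) T,
      ‖∫ s in (0:ℝ)..t, S (t - s) ((∫ v, (g₁ (s, v) - 1) • G s (Y s) v ∂ν) -
          ∫ v, (g₂ (s, v) - 1) • G s (Z s) v ∂ν)‖ ≤
        (⨆ s : Set.Icc (0 : ℝ) T, ‖Y s - Z s‖) * (∫ p, G1 p * |g₁ p - 1| ∂νT) +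
        (1 + ⨆ s : Set.Icc (0 : ℝ) T, ‖Z s‖) * ∫ p, G0 p * |g₁ p - g₂ p| ∂νT := by
  -- abbreviations
  intro t ht
  obtain ⟨ht0, htT⟩ := ht
  set μT : Measure ℝ := volume.restrict (Set.Icc 0 T) with hμT
  have hνT' : νT = μT.prod ν := hνT
  set F1 : ℝ × X → ℝ := fun p => G1 p * |g₁ p - 1| with hF1
  set F0 : ℝ × X → ℝ := fun p => G0 p * |g₁ p - g₂ p| with hF0
  have hF1nonneg : ∀ p, 0 ≤ F1 p := fun p => mul_nonneg (hG1nonneg p) (abs_nonneg _)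
  have hF0nonneg : ∀ p, 0 ≤ F0 p := fun p => mul_nonneg (hG0nonneg p) (abs_nonneg _)
  have hInt1' : Integrable F1 (μT.prod ν) := by rwa [← hνT']
  have hInt0' : Integrable F0 (μT.prod ν) := by rwa [← hνT']
  -- the sup constants
  set M1 : ℝ := ⨆ s : Set.Icc (0 : ℝ) T, ‖Y s - Z s‖ with hM1def
  set M0 : ℝ := ⨆ s : Set.Icc (0 : ℝ) T, ‖Z s‖ with hM0def
  have hM1nonneg : 0 ≤ M1 := Real.iSup_nonneg fun _ => norm_nonneg _
  have hM0nonneg : 0 ≤ M0 := Real.iSup_nonneg fun _ => norm_nonneg _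
  have hbdd1 : BddAbove (Set.range fun s : Set.Icc (0 : ℝ) T => ‖Y s - Z s‖) := by
    have hc : ContinuousOn (fun s => ‖Y s - Z s‖) (Set.Icc 0 T) :=
      (hYcont.sub hZcont).norm
    have := (isCompact_Icc.image_of_continuousOn hc).bddAbove
    rwa [show (Set.range fun s : Set.Icc (0 : ℝ) T => ‖Y s - Z s‖)
        = (fun s => ‖Y s - Z s‖) '' Set.Icc 0 T by
      ext x; simp [Set.mem_image]]
  have hbdd0 : BddAbove (Set.range fun s : Set.Icc (0 : ℝ) T => ‖Z s‖) := by
    have hc : ContinuousOn (fun s => ‖Z s‖) (Set.Icc 0 T) := hZcont.norm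
    have := (isCompact_Icc.image_of_continuousOn hc).bddAbove
    rwa [show (Set.range fun s : Set.Icc (0 : ℝ) T => ‖Z s‖)
        = (fun s => ‖Z s‖) '' Set.Icc 0 T by
      ext x; simp [Set.mem_image]]
  have hM1le : ∀ s ∈ Set.Icc (0 : ℝ) T, ‖Y s - Z s‖ ≤ M1 := fun s hs =>
    le_ciSup hbdd1 (⟨s, hs⟩ : Set.Icc (0 : ℝ) T)
  have hM0le : ∀ s ∈ Set.Icc (0 : ℝ) T, ‖Z s‖ ≤ M0 := fun s hs =>
    le_ciSup hbdd0 (⟨s, hs⟩ : Set.Icc (0 : ℝ) T)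
  -- the partial integrals
  set h1 : ℝ → ℝ := fun s => ∫ v, F1 (s, v) ∂ν with hh1def
  set h0 : ℝ → ℝ := fun s => ∫ v, F0 (s, v) ∂ν with hh0def
  have hh1nonneg : ∀ s, 0 ≤ h1 s := fun s => integral_nonneg fun v => hF1nonneg _
  have hh0nonneg : ∀ s, 0 ≤ h0 s := fun s => integral_nonneg fun v => hF0nonneg _
  have hh1int : IntegrableOn h1 (Set.Icc 0 T) volume := by
    have := hInt1'.integral_norm_prod_left
    refine this.congr (Eventually.of_forall fun s => ?_)
    simp only [hh1def]
    exact integral_congr_ae (Eventually.of_forall fun v =>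
      Real.norm_of_nonneg (hF1nonneg _))
  have hh0int : IntegrableOn h0 (Set.Icc 0 T) volume := by
    have := hInt0'.integral_norm_prod_left
    refine this.congr (Eventually.of_forall fun s => ?_)
    simp only [hh0def]
    exact integral_congr_ae (Eventually.of_forall fun v =>
      Real.norm_of_nonneg (hF0nonneg _))
  have hsub : Set.Ioc (0 : ℝ) t ⊆ Set.Icc 0 T := fun s hs =>
    ⟨le_of_lt hs.1, hs.2.trans htT⟩
  have hh1intt : IntegrableOn h1 (Set.Ioc 0 t) volume := hh1int.mono_set hsub
  have hh0intt : IntegrableOn h0 (Set.Ioc 0 t) volume := hh0int.mono_set hsub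
  -- the integrand and its bound
  set f : ℝ → H := fun s => S (t - s) ((∫ v, (g₁ (s, v) - 1) • G s (Y s) v ∂ν) -
      ∫ v, (g₂ (s, v) - 1) • G s (Z s) v ∂ν) with hfdef
  set φ : ℝ → ℝ := fun s => M1 * h1 s + (1 + M0) * h0 s with hφdef
  have hφint : IntegrableOn φ (Set.Ioc 0 t) volume :=
    (hh1intt.const_mul M1).add (hh0intt.const_mul (1 + M0))
  -- a.e. integrability of slices
  have hae1 : ∀ᵐ s ∂(volume.restrict (Set.Ioc 0 t)),
      Integrable (fun v => F1 (s, v)) ν :=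
    ae_restrict_of_ae_restrict_of_subset hsub hInt1'.prod_right_ae
  have hae0 : ∀ᵐ s ∂(volume.restrict (Set.Ioc 0 t)),
      Integrable (fun v => F0 (s, v)) ν :=
    ae_restrict_of_ae_restrict_of_subset hsub hInt0'.prod_right_ae
  -- the pointwise bound, a.e. on (0, t]
  have hbound : ∀ᵐ s ∂(volume.restrict (Set.Ioc 0 t)), ‖f s‖ ≤ φ s := by
    filter_upwards [ae_restrict_mem measurableSet_Ioc, hae1, hae0] with s hs int1 int0
    have hs0 : (0 : ℝ) ≤ s := hs.1.le
    have hst : s ≤ t := hs.2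
    have hsIcc : s ∈ Set.Icc (0 : ℝ) T := hsub hs
    set A : X → H := fun v => (g₁ (s, v) - 1) • (G s (Y s) v - G s (Z s) v) with hA
    set B : X → H := fun v => (g₁ (s, v) - g₂ (s, v)) • G s (Z s) v with hB
    have hGYmeas : Measurable fun v => G s (Y s) v :=
      hGmeas.comp ((measurable_const (a := s)).prodMk
        ((measurable_const (a := Y s)).prodMk measurable_id))
    have hGZmeas : Measurable fun v => G s (Z s) v :=
      hGmeas.comp ((measurable_const (a := s)).prodMk
        ((measurable_const (a := Z s)).prodMk measurable_id))
    have hg1s : Measurable fun v => g₁ (s, v) :=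
      hg₁meas.comp ((measurable_const (a := s)).prodMk measurable_id)
    have hg2s : Measurable fun v => g₂ (s, v) :=
      hg₂meas.comp ((measurable_const (a := s)).prodMk measurable_id)
    have hAmeas : AEStronglyMeasurable A ν :=
      (((hg1s.sub measurable_const).smul (hGYmeas.sub hGZmeas))).aestronglyMeasurable
    have hBmeas : AEStronglyMeasurable B ν :=
      ((hg1s.sub hg2s).smul hGZmeas).aestronglyMeasurable
    have hAbound : ∀ v, ‖A v‖ ≤ F1 (s, v) * ‖Y s - Z s‖ := by
      intro v
      rw [hA, norm_smul, Real.norm_eq_abs]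
      calc |g₁ (s, v) - 1| * ‖G s (Y s) v - G s (Z s) v‖
          ≤ |g₁ (s, v) - 1| * (G1 (s, v) * ‖Y s - Z s‖) :=
            mul_le_mul_of_nonneg_left (hG1dom s (Y s) (Z s) v) (abs_nonneg _)
        _ = F1 (s, v) * ‖Y s - Z s‖ := by rw [hF1]; ring
    have hBbound : ∀ v, ‖B v‖ ≤ F0 (s, v) * (1 + ‖Z s‖) := by
      intro v
      rw [hB, norm_smul, Real.norm_eq_abs]
      calc |g₁ (s, v) - g₂ (s, v)| * ‖G s (Z s) v‖
          ≤ |g₁ (s, v) - g₂ (s, v)| * (G0 (s, v) * (1 + ‖Z s‖)) :=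
            mul_le_mul_of_nonneg_left (hG0dom s (Z s) v) (abs_nonneg _)
        _ = F0 (s, v) * (1 + ‖Z s‖) := by rw [hF0]; ring
    have hAint : Integrable A ν := by
      refine Integrable.mono' (int1.mul_const ‖Y s - Z s‖) hAmeas
        (Eventually.of_forall hAbound)
    have hBint : Integrable B ν := by
      refine Integrable.mono' (int0.mul_const (1 + ‖Z s‖)) hBmeas
        (Eventually.of_forall hBbound)
    have hw : (∫ v, (g₁ (s, v) - 1) • G s (Y s) v ∂ν) -
        (∫ v, (g₂ (s, v) - 1) • G s (Z s) v ∂ν) = (∫ v, A v ∂ν) + (∫ v, B v ∂ν) := by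
      rw [← integral_sub (hIntY s hsIcc) (hIntZ s hsIcc), ← integral_add hAint hBint]
      refine integral_congr_ae (Eventually.of_forall fun v => ?_)
      rw [hA, hB]
      simp only [sub_smul, one_smul, smul_sub]
      abel
    have hnormS : ‖f s‖ ≤ ‖(∫ v, A v ∂ν) + (∫ v, B v ∂ν)‖ := by
      rw [hfdef]
      simp only
      rw [hw]
      calc ‖S (t - s) ((∫ v, A v ∂ν) + (∫ v, B v ∂ν))‖
          ≤ ‖S (t - s)‖ * ‖(∫ v, A v ∂ν) + (∫ v, B v ∂ν)‖ :=
            (S (t - s)).le_opNorm _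
        _ ≤ 1 * ‖(∫ v, A v ∂ν) + (∫ v, B v ∂ν)‖ :=
            mul_le_mul_of_nonneg_right (hScontr _ (sub_nonneg.2 hst)) (norm_nonneg _)
        _ = _ := one_mul _
    refine hnormS.trans ?_
    calc ‖(∫ v, A v ∂ν) + (∫ v, B v ∂ν)‖
        ≤ ‖∫ v, A v ∂ν‖ + ‖∫ v, B v ∂ν‖ := norm_add_le _ _
      _ ≤ (∫ v, ‖A v‖ ∂ν) + ∫ v, ‖B v‖ ∂ν :=
          add_le_add (norm_integral_le_integral_norm _) (norm_integral_le_integral_norm _)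
      _ ≤ (∫ v, F1 (s, v) * M1 ∂ν) + ∫ v, F0 (s, v) * (1 + M0) ∂ν := by
          refine add_le_add (integral_mono hAint.norm (int1.mul_const M1) fun v => ?_)
            (integral_mono hBint.norm (int0.mul_const (1 + M0)) fun v => ?_)
          · exact (hAbound v).trans
              (mul_le_mul_of_nonneg_left (hM1le s hsIcc) (hF1nonneg _))
          · exact (hBbound v).trans
              (mul_le_mul_of_nonneg_left
                (add_le_add_right (hM0le s hsIcc) 1) (hF0nonneg _))
      _ = φ s := by
          rw [hφdef]
          simp only [integral_mul_const]
          ring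
  -- assemble
  have hfint : IntegrableOn (fun s => ‖f s‖) (Set.Ioc 0 t) volume :=
    (intervalIntegrable_iff_integrableOn_Ioc_of_le ht0).1 (hOuter t ⟨ht0, htT⟩).norm
  calc ‖∫ s in (0:ℝ)..t, f s‖
      ≤ ∫ s in (0:ℝ)..t, ‖f s‖ := intervalIntegral.norm_integral_le_integral_norm ht0
    _ = ∫ s in Set.Ioc 0 t, ‖f s‖ := intervalIntegral.integral_of_le ht0
    _ ≤ ∫ s in Set.Ioc 0 t, φ s := integral_mono_ae hfint hφint hbound
    _ = M1 * (∫ s in Set.Ioc 0 t, h1 s) + (1 + M0) * ∫ s in Set.Ioc 0 t, h0 s := by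
        rw [hφdef, integral_add (hh1intt.const_mul M1) (hh0intt.const_mul (1 + M0)),
          integral_const_mul, integral_const_mul]
    _ ≤ M1 * (∫ s in Set.Icc 0 T, h1 s) + (1 + M0) * ∫ s in Set.Icc 0 T, h0 s := by
        refine add_le_add (mul_le_mul_of_nonneg_left ?_ hM1nonneg)
          (mul_le_mul_of_nonneg_left ?_ (by linarith))
        · exact setIntegral_mono_set hh1int
            (Eventually.of_forall fun s => hh1nonneg s) (HasSubset.Subset.eventuallyLE hsub)
        · exact setIntegral_mono_set hh0int
            (Eventually.of_forall fun s => hh0nonneg s) (HasSubset.Subset.eventuallyLE hsub)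
    _ = M1 * (∫ p, F1 p ∂νT) + (1 + M0) * ∫ p, F0 p ∂νT := by
        rw [hνT', integral_prod F1 hInt1', integral_prod F0 hInt0']
end
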